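/- arXiv:1902.07621 — 5 statements merged into one kernel-verified Lean document; each statement's English description precedes it below -/
import Mathlib

section
/- Let n ≥ 1 and let Y ⊆ ℝⁿ be a nonempty open convex set. Let F, G : ℝⁿ → ℝ be nonnegative Borel functions with ∫_{ℝⁿ} F dx = ∫_Y G dy = 1 such that F and 1/F are essentially bounded on every compact subset of ℝⁿ and G and 1/G are essentially bounded on every compact subset of Y. Let u : ℝⁿ → ℝ be a convex function whose a.e.-defined gradient ∇u pushes F dx forward to 1_Y G dy. Then u is an Alexandrov solution of the associated Monge–Ampère equation: for every Borel set A ⊆ ℝⁿ, the Lebesgue measure of the subdifferential image ∂u(A) equals ∫_A F(x)/G(∇u(x)) dx. -/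
open MeasureTheory Set
open scoped InnerProductSpace ENNReal

/-- The subdifferential of `u` at `x`:
`∂u(x) = {p : ∀ z, u(z) ≥ u(x) + ⟨p, z − x⟩}`. -/
def subdifferential {n : ℕ} (u : EuclideanSpace ℝ (Fin n) → ℝ)
    (x : EuclideanSpace ℝ (Fin n)) : Set (EuclideanSpace ℝ (Fin n)) :=
  {p | ∀ z, u x + ⟪p, z - x⟫_ℝ ≤ u z}

section Aux

variable {n : ℕ}

/-- Composition of a convex function with a line is convex. -/
lemma aux_convexOn_line {u : EuclideanSpace ℝ (Fin n) → ℝ} (hu : ConvexOn ℝ Set.univ u)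
    (x v : EuclideanSpace ℝ (Fin n)) : ConvexOn ℝ Set.univ (fun t : ℝ => u (x + t • v)) := by
  refine ⟨convex_univ, fun s _ t _ a b ha hb hab => ?_⟩
  have key : a • (x + s • v) + b • (x + t • v) = x + (a * s + b * t) • v := by
    calc a • (x + s • v) + b • (x + t • v)
        = (a + b) • x + (a * s + b * t) • v := by
          simp only [smul_add, add_smul, mul_smul]; abel
      _ = x + (a * s + b * t) • v := by rw [hab, one_smul]
  have h := hu.2 (mem_univ (x + s • v)) (mem_univ (x + t • v)) ha hb hab
  rw [key] at h
  simpa using h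

/-- One-dimensional fact: a convex function lies above its tangent line. -/
lemma aux_convex_deriv_le {ψ : ℝ → ℝ} (hψ : ConvexOn ℝ Set.univ ψ) {m : ℝ}
    (hd : HasDerivAt ψ m 0) : ψ 0 + m ≤ ψ 1 := by
  have h2 : Filter.Tendsto (slope ψ 0) (nhdsWithin 0 (Set.Ioi 0)) (nhds m) :=
    (hasDerivAt_iff_tendsto_slope.1 hd).mono_left (nhdsWithin_mono 0 fun t ht => ne_of_gt ht)
  have hev : ∀ᶠ t in nhdsWithin (0 : ℝ) (Set.Ioi 0), slope ψ 0 t ≤ ψ 1 - ψ 0 := by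
    filter_upwards [Ioo_mem_nhdsGT_of_mem (Set.left_mem_Ico.2 one_pos)] with t ht
    have hcomb := hψ.2 (mem_univ (0 : ℝ)) (mem_univ (1 : ℝ))
      (by linarith [ht.2] : (0 : ℝ) ≤ 1 - t) (le_of_lt ht.1) (by ring)
    simp only [smul_eq_mul, mul_zero, mul_one, add_zero, zero_add] at hcomb
    rw [slope_def_field]
    rw [sub_zero, div_le_iff₀ ht.1]
    nlinarith [hcomb, ht.1, ht.2]
  have := le_of_tendsto h2 hev
  linarith

/-- The gradient of a convex function is a subgradient. -/
lemma aux_grad_mem_subdifferential {u : EuclideanSpace ℝ (Fin n) → ℝ}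
    (hu : ConvexOn ℝ Set.univ u) {p x : EuclideanSpace ℝ (Fin n)}
    (h : HasGradientAt u p x) : p ∈ subdifferential u x := by
  intro z
  set v := z - x with hv
  have hline : HasDerivAt (fun t : ℝ => x + t • v) v 0 := by
    simpa using ((hasDerivAt_id (0 : ℝ)).smul_const v).const_add x
  have hF : HasFDerivAt u (InnerProductSpace.toDual ℝ _ p) (x + (0 : ℝ) • v) := by
    simpa using h.hasFDerivAt
  have hcomp : HasDerivAt (fun t : ℝ => u (x + t • v)) ⟪p, v⟫_ℝ 0 := by
    have := hF.comp_hasDerivAt 0 hline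
    simpa [InnerProductSpace.toDual_apply_apply, Function.comp_def] using this
  have := aux_convex_deriv_le (aux_convexOn_line hu x v) hcomp
  simpa [hv] using this

/-- First-order condition: a local subgradient at a differentiability point is the gradient. -/
lemma aux_gradient_eq_of_local_subgrad {f : EuclideanSpace ℝ (Fin n) → ℝ}
    {x p : EuclideanSpace ℝ (Fin n)} (hf : DifferentiableAt ℝ f x)
    (hloc : ∀ᶠ z in nhds x, f x + ⟪p, z - x⟫_ℝ ≤ f z) : gradient f x = p := by
  have hmin : IsLocalMin (fun z => f z - ⟪p, z⟫_ℝ) x := by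
    filter_upwards [hloc] with z hz
    have h2 : ⟪p, z - x⟫_ℝ = ⟪p, z⟫_ℝ - ⟪p, x⟫_ℝ := inner_sub_right p z x
    show f x - ⟪p, x⟫_ℝ ≤ f z - ⟪p, z⟫_ℝ
    rw [h2] at hz; linarith
  have hd : HasFDerivAt (fun z => f z - ⟪p, z⟫_ℝ) (fderiv ℝ f x - innerSL ℝ p) x :=
    hf.hasFDerivAt.sub ((innerSL ℝ p).hasFDerivAt)
  have h0 := hmin.hasFDerivAt_eq_zero hd
  have hfd : fderiv ℝ f x = innerSL ℝ p := by rwa [sub_eq_zero] at h0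
  unfold gradient
  rw [hfd]
  refine ((InnerProductSpace.toDual ℝ (EuclideanSpace ℝ (Fin n))).symm_apply_eq).2 ?_
  ext y
  simp [InnerProductSpace.toDual_apply_apply]

end Aux

set_option maxHeartbeats 2000000 in
/-- **Step 3 of the proof of Theorem 1 (equation (eq:Alex2)), case X = ℝⁿ.**
If `Y` is a nonempty open convex set, `F, 1/F` are essentially bounded on every compact
subset of `ℝⁿ`, `G, 1/G` on every compact subset of `Y`, total masses are one, and the
a.e.-defined gradient of the convex function `u` pushes `F dx` forward to `1_Y G dy`, then
`u` is an Alexandrov solution of the Monge–Ampère equation: for every Borel set `A`,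
`|∂u(A)| = ∫_A F(x)/G(∇u(x)) dx`. -/
theorem brenier_mccann_is_alexandrov_solution
    (n : ℕ) (hn : 1 ≤ n)
    (Y : Set (EuclideanSpace ℝ (Fin n)))
    (hYne : Y.Nonempty) (hYopen : IsOpen Y) (hYconv : Convex ℝ Y)
    (F G : EuclideanSpace ℝ (Fin n) → ℝ)
    (hFmeas : Measurable F) (hGmeas : Measurable G)
    (hFnn : ∀ x, 0 ≤ F x) (hGnn : ∀ y, 0 ≤ G y)
    (hFbd : ∀ K : Set (EuclideanSpace ℝ (Fin n)), IsCompact K →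
      ∃ lam Lam : ℝ, 0 < lam ∧ lam ≤ Lam ∧
        ∀ᵐ x ∂(volume.restrict K), lam ≤ F x ∧ F x ≤ Lam)
    (hGbd : ∀ K : Set (EuclideanSpace ℝ (Fin n)), K ⊆ Y → IsCompact K →
      ∃ lam Lam : ℝ, 0 < lam ∧ lam ≤ Lam ∧
        ∀ᵐ y ∂(volume.restrict K), lam ≤ G y ∧ G y ≤ Lam)
    (hF1 : ∫ x, F x = 1)
    (hG1 : ∫ y in Y, G y = 1)
    (u : EuclideanSpace ℝ (Fin n) → ℝ)
    (hu : ConvexOn ℝ Set.univ u)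
    (T : EuclideanSpace ℝ (Fin n) → EuclideanSpace ℝ (Fin n))
    (hTmeas : Measurable T)
    (hTgrad : ∀ᵐ x ∂(volume : Measure (EuclideanSpace ℝ (Fin n))), HasGradientAt u (T x) x)
    (hpush : Measure.map T (volume.withDensity (fun x => ENNReal.ofReal (F x)))
      = (volume.restrict Y).withDensity (fun y => ENNReal.ofReal (G y))) :
    ∀ A : Set (EuclideanSpace ℝ (Fin n)), MeasurableSet A →
      volume (⋃ x ∈ A, subdifferential u x)
        = ∫⁻ x in A, ENNReal.ofReal (F x / G (T x)) := by
  classical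
  set μ : Measure (EuclideanSpace ℝ (Fin n)) :=
    volume.withDensity (fun x => ENNReal.ofReal (F x)) with hμdef
  set ν : Measure (EuclideanSpace ℝ (Fin n)) :=
    (volume.restrict Y).withDensity (fun y => ENNReal.ofReal (G y)) with hνdef
  have hFm' : Measurable fun x : EuclideanSpace ℝ (Fin n) => ENNReal.ofReal (F x) :=
    hFmeas.ennreal_ofReal
  have hGm' : Measurable fun y : EuclideanSpace ℝ (Fin n) => ENNReal.ofReal (G y) :=
    hGmeas.ennreal_ofReal
  have hu_cont : Continuous u := by
    rw [← continuousOn_univ]; exact hu.continuousOn isOpen_univ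
  -- F is positive a.e.
  have hF_pos : ∀ᵐ x ∂(volume : Measure (EuclideanSpace ℝ (Fin n))), 0 < F x := by
    have hm : ∀ m : ℕ, ∀ᵐ x ∂(volume : Measure (EuclideanSpace ℝ (Fin n))),
        x ∈ Metric.closedBall (0 : EuclideanSpace ℝ (Fin n)) m → 0 < F x := by
      intro m
      obtain ⟨lam, Lam, hlam, -, hae⟩ := hFbd (Metric.closedBall 0 m) (isCompact_closedBall _ _)
      have h := (ae_restrict_iff' Metric.isClosed_closedBall.measurableSet).1 hae
      filter_upwards [h] with x hx hxm
      exact lt_of_lt_of_le hlam (hx hxm).1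
    filter_upwards [ae_all_iff.2 hm] with x hx
    obtain ⟨m, hm⟩ := exists_nat_ge ‖x‖
    exact hx m (by rwa [Metric.mem_closedBall, dist_zero_right])
  -- μ-null implies volume-null
  have hvol_of_μ : ∀ N : Set (EuclideanSpace ℝ (Fin n)), μ N = 0 → volume N = 0 := by
    intro N hN
    set M := toMeasurable μ N with hMdef
    have hMmeas : MeasurableSet M := measurableSet_toMeasurable μ N
    have hM0 : μ M = 0 := by rw [hMdef, measure_toMeasurable]; exact hN
    have hint : ∫⁻ x in M, ENNReal.ofReal (F x) ∂volume = 0 := by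
      rw [hμdef, withDensity_apply _ hMmeas] at hM0; exact hM0
    have hF0 : ∀ᵐ x ∂volume.restrict M, ENNReal.ofReal (F x) = 0 :=
      (lintegral_eq_zero_iff hFm').1 hint
    have hfalse : ∀ᵐ x ∂volume.restrict M, False := by
      filter_upwards [hF0, ae_restrict_of_ae hF_pos] with x h1 h2
      rw [ENNReal.ofReal_eq_zero] at h1; linarith
    have h2 : volume.restrict M = 0 := ae_eq_bot.1 (Filter.eventually_false_iff_eq_bot.1 hfalse)
    have hM : volume M = 0 := by
      calc volume M = volume.restrict M Set.univ := (Measure.restrict_apply_univ M).symm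
        _ = 0 := by rw [h2]; rfl
    exact measure_mono_null (subset_toMeasurable μ N) hM
  have hμ_of_vol : ∀ N : Set (EuclideanSpace ℝ (Fin n)), volume N = 0 → μ N = 0 := by
    intro N h
    exact (withDensity_absolutelyContinuous volume _) h
  have hmapν : ∀ Z : Set (EuclideanSpace ℝ (Fin n)), MeasurableSet Z → ν Z = μ (T ⁻¹' Z) := by
    intro Z hZ
    rw [← hpush, Measure.map_apply hTmeas hZ]
  have hνYc : ν Yᶜ = 0 := by
    rw [hνdef, withDensity_apply _ hYopen.measurableSet.compl,
      Measure.restrict_restrict hYopen.measurableSet.compl, Set.compl_inter_self,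
      Measure.restrict_empty, lintegral_zero_measure]
  have hTY_ae : ∀ᵐ x ∂(volume : Measure (EuclideanSpace ℝ (Fin n))), T x ∈ Y := by
    have h1 : μ (T ⁻¹' Yᶜ) = 0 := by
      rw [← hmapν _ hYopen.measurableSet.compl]; exact hνYc
    have h2 : volume (T ⁻¹' Yᶜ) = 0 := hvol_of_μ _ h1
    rw [ae_iff]
    exact h2
  -- the good set Ω
  have hS0 : ∀ᵐ x ∂(volume : Measure (EuclideanSpace ℝ (Fin n))),
      T x ∈ subdifferential u x ∧ T x ∈ Y := by
    filter_upwards [hTgrad, hTY_ae] with x h1 h2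
    exact ⟨aux_grad_mem_subdifferential hu h1, h2⟩
  obtain ⟨Ω, hΩmeas, hΩc, hΩ⟩ : ∃ Ω : Set (EuclideanSpace ℝ (Fin n)), MeasurableSet Ω ∧
      volume Ωᶜ = 0 ∧ ∀ x ∈ Ω, T x ∈ subdifferential u x ∧ T x ∈ Y := by
    set S0 := {x | T x ∈ subdifferential u x ∧ T x ∈ Y} with hS0def
    refine ⟨(toMeasurable volume S0ᶜ)ᶜ, (measurableSet_toMeasurable _ _).compl, ?_, ?_⟩
    · rw [compl_compl, measure_toMeasurable]
      exact ae_iff.1 hS0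
    · intro x hx
      by_contra h
      exact hx (subset_toMeasurable _ _ h)
  -- G is positive a.e. on Y
  have hG_posY : ∀ᵐ q ∂(volume : Measure (EuclideanSpace ℝ (Fin n))), q ∈ Y → 0 < G q := by
    set K : ℕ → Set (EuclideanSpace ℝ (Fin n)) := fun m =>
      Metric.closedBall 0 m ∩ {x | ∀ y ∈ Yᶜ, 1 / (m + 1 : ℝ) ≤ dist x y} with hKdef
    have hKclosed2 : ∀ m : ℕ,
        IsClosed {x : EuclideanSpace ℝ (Fin n) | ∀ y ∈ Yᶜ, 1 / (m + 1 : ℝ) ≤ dist x y} := by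
      intro m
      have he : {x : EuclideanSpace ℝ (Fin n) | ∀ y ∈ Yᶜ, 1 / (m + 1 : ℝ) ≤ dist x y} =
          ⋂ y ∈ Yᶜ, {x | 1 / (m + 1 : ℝ) ≤ dist x y} := by
        ext x; simp
      rw [he]
      exact isClosed_biInter fun y _ =>
        isClosed_le continuous_const (Continuous.dist continuous_id continuous_const)
    have hKcomp : ∀ m, IsCompact (K m) := fun m =>
      (isCompact_closedBall _ _).inter_right (hKclosed2 m)
    have hKY : ∀ m, K m ⊆ Y := by
      intro m x hx
      by_contra hxY
      have h := hx.2 x hxY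
      rw [dist_self] at h
      have : (0 : ℝ) < 1 / (m + 1 : ℝ) := by positivity
      linarith
    have hKmem : ∀ q ∈ Y, ∃ m : ℕ, q ∈ K m := by
      intro q hq
      obtain ⟨δ, hδ, hδY⟩ := Metric.isOpen_iff.1 hYopen q hq
      obtain ⟨m1, hm1⟩ := exists_nat_ge ‖q‖
      obtain ⟨m2, hm2⟩ := exists_nat_one_div_lt hδ
      refine ⟨max m1 m2, ⟨?_, ?_⟩⟩
      · rw [Metric.mem_closedBall, dist_zero_right]
        calc ‖q‖ ≤ m1 := hm1
          _ ≤ ((max m1 m2 : ℕ) : ℝ) := by exact_mod_cast Nat.le_max_left m1 m2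
      · intro y hy
        have hdist : δ ≤ dist q y := by
          by_contra h
          push_neg at h
          exact hy (hδY (by rwa [Metric.mem_ball, dist_comm]))
        calc 1 / ((max m1 m2 : ℕ) + 1 : ℝ) ≤ 1 / (m2 + 1 : ℝ) := by
              apply one_div_le_one_div_of_le
              · positivity
              · have : (m2 : ℝ) ≤ ((max m1 m2 : ℕ) : ℝ) := by exact_mod_cast Nat.le_max_right m1 m2
                linarith
          _ ≤ δ := le_of_lt hm2
          _ ≤ dist q y := hdist
    have hm : ∀ m : ℕ, ∀ᵐ q ∂(volume : Measure (EuclideanSpace ℝ (Fin n))),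
        q ∈ K m → 0 < G q := by
      intro m
      obtain ⟨lam, Lam, hlam, -, hae⟩ := hGbd (K m) (hKY m) (hKcomp m)
      have h := (ae_restrict_iff' (hKcomp m).isClosed.measurableSet).1 hae
      filter_upwards [h] with q hq hqK
      exact lt_of_lt_of_le hlam (hq hqK).1
    filter_upwards [ae_all_iff.2 hm] with q hq hqY
    obtain ⟨m, hqm⟩ := hKmem q hqY
    exact hq m hqm
  -- ν-null measurable subsets of Y are volume-null
  have hνvol : ∀ Z : Set (EuclideanSpace ℝ (Fin n)), MeasurableSet Z → Z ⊆ Y → ν Z = 0 →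
      volume Z = 0 := by
    intro Z hZm hZY hZ0
    have h1 : ∫⁻ q in Z, ENNReal.ofReal (G q) ∂(volume.restrict Y) = 0 := by
      rw [hνdef, withDensity_apply _ hZm] at hZ0; exact hZ0
    rw [Measure.restrict_restrict hZm, Set.inter_eq_self_of_subset_left hZY] at h1
    have h2 := (lintegral_eq_zero_iff hGm').1 h1
    have h3 : ∀ᵐ q ∂(volume.restrict Z), 0 < G q := by
      filter_upwards [ae_restrict_of_ae hG_posY, ae_restrict_mem hZm] with q ha hb
      exact ha (hZY hb)
    have hfalse : ∀ᵐ q ∂(volume.restrict Z), False := by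
      filter_upwards [h2, h3] with q ha hb
      have ha' : ENNReal.ofReal (G q) = 0 := by simpa using ha
      have := ENNReal.ofReal_eq_zero.1 ha'
      linarith
    have h4 : volume.restrict Z = 0 := ae_eq_bot.1 (Filter.eventually_false_iff_eq_bot.1 hfalse)
    calc volume Z = volume.restrict Z Set.univ := (Measure.restrict_apply_univ Z).symm
      _ = 0 := by rw [h4]; rfl
  -- volume-null intersection with Y gives ν-null
  have hνnull : ∀ Z : Set (EuclideanSpace ℝ (Fin n)), MeasurableSet Z →
      volume (Z ∩ Y) = 0 → ν Z = 0 := by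
    intro Z hZm h0
    rw [hνdef, withDensity_apply _ hZm, Measure.restrict_restrict hZm,
      Measure.restrict_eq_zero.2 h0, lintegral_zero_measure]
  -- every subgradient lies in the closure of Y
  have hrange : ∀ x, subdifferential u x ⊆ closure Y := by
    intro x p hp
    by_contra hpY
    obtain ⟨f, c, hfY, hfp⟩ :=
      geometric_hahn_banach_closed_point hYconv.closure isClosed_closure hpY
    set v := (InnerProductSpace.toDual ℝ (EuclideanSpace ℝ (Fin n))).symm f with hvdef
    have hfv : ∀ w, ⟪v, w⟫_ℝ = f w := fun w => InnerProductSpace.toDual_symm_apply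
    have hΩ'c : volume (Ω ∩ (fun z => z + v) ⁻¹' Ω)ᶜ = 0 := by
      rw [Set.compl_inter]
      refine measure_union_null hΩc ?_
      rw [← Set.preimage_compl, measure_preimage_add_right]
      exact hΩc
    have hseq : ∀ k : ℕ, ∃ z : EuclideanSpace ℝ (Fin n),
        z ∈ Metric.ball x (1 / (k + 1)) ∧ z ∈ Ω ∧ z + v ∈ Ω := by
      intro k
      have h1 : 0 < (1 : ℝ) / (k + 1) := by positivity
      by_contra hcon
      push_neg at hcon
      have hsubset : Metric.ball x (1 / (k + 1 : ℝ)) ⊆ (Ω ∩ (fun z => z + v) ⁻¹' Ω)ᶜ := by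
        intro z hz hmem
        exact hcon z hz hmem.1 hmem.2
      have := measure_mono_null hsubset hΩ'c
      exact (Metric.measure_ball_pos volume x h1).ne' this
    choose z hz1 hz2 hz3 using hseq
    have hzx : Filter.Tendsto z Filter.atTop (nhds x) := by
      rw [tendsto_iff_dist_tendsto_zero]
      refine squeeze_zero (fun k => dist_nonneg) (fun k => le_of_lt (hz1 k)) ?_
      exact tendsto_one_div_add_atTop_nhds_zero_nat
    have hineq : ∀ k, u (z k + v) ≤ u (z k) + c := by
      intro k
      have hsubk := (hΩ _ (hz3 k)).1 (z k)
      have hYk : f (T (z k + v)) < c := hfY _ (subset_closure (hΩ _ (hz3 k)).2)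
      have hsimp : z k - (z k + v) = -v := by abel
      rw [hsimp, inner_neg_right] at hsubk
      have hTv : ⟪T (z k + v), v⟫_ℝ = f (T (z k + v)) := by
        rw [real_inner_comm]; exact hfv _
      linarith
    have l1 : Filter.Tendsto (fun k => u (z k + v)) Filter.atTop (nhds (u (x + v))) :=
      (hu_cont.tendsto _).comp (hzx.add tendsto_const_nhds)
    have l2 : Filter.Tendsto (fun k => u (z k) + c) Filter.atTop (nhds (u x + c)) :=
      ((hu_cont.tendsto _).comp hzx).add tendsto_const_nhds
    have hfinal : u (x + v) ≤ u x + c := le_of_tendsto_of_tendsto' l1 l2 hineq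
    have hsub := hp (x + v)
    rw [add_sub_cancel_left] at hsub
    have hpv : ⟪p, v⟫_ℝ = f p := by rw [real_inner_comm]; exact hfv p
    linarith
  -- the Legendre transform
  set ustar : EuclideanSpace ℝ (Fin n) → ℝ :=
    fun pt => sSup (Set.range fun z => ⟪pt, z⟫_ℝ - u z) with hustar
  have hval : ∀ (x pt : EuclideanSpace ℝ (Fin n)), pt ∈ subdifferential u x →
      BddAbove (Set.range fun z => ⟪pt, z⟫_ℝ - u z) ∧ ustar pt = ⟪pt, x⟫_ℝ - u x := by
    intro x pt hpt
    have hbd : ∀ z, ⟪pt, z⟫_ℝ - u z ≤ ⟪pt, x⟫_ℝ - u x := by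
      intro z
      have h := hpt z
      rw [inner_sub_right] at h
      linarith
    have hB : BddAbove (Set.range fun z => ⟪pt, z⟫_ℝ - u z) := by
      refine ⟨⟪pt, x⟫_ℝ - u x, ?_⟩
      rintro y ⟨w, rfl⟩
      exact hbd w
    refine ⟨hB, le_antisymm (csSup_le (Set.range_nonempty _) ?_) (le_csSup hB ⟨x, rfl⟩)⟩
    rintro y ⟨w, rfl⟩
    exact hbd w
  have hsubstar : ∀ (x pt r : EuclideanSpace ℝ (Fin n)), pt ∈ subdifferential u x →
      BddAbove (Set.range fun z => ⟪r, z⟫_ℝ - u z) →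
      ustar pt + ⟪x, r - pt⟫_ℝ ≤ ustar r := by
    intro x pt r hpt hBr
    have h1 : ustar pt + ⟪x, r - pt⟫_ℝ = ⟪r, x⟫_ℝ - u x := by
      rw [(hval x pt hpt).2, inner_sub_right]
      rw [real_inner_comm x r, real_inner_comm x pt]
      ring
    rw [h1]
    exact le_csSup hBr ⟨x, rfl⟩
  -- Y is contained in the domain of the Legendre transform
  have hYB : ∀ pt ∈ Y, BddAbove (Set.range fun z => ⟪pt, z⟫_ℝ - u z) := by
    intro p hp
    by_contra hnb
    obtain ⟨δ, hδpos, hδY⟩ := Metric.isOpen_iff.1 hYopen p hp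
    set ε := δ / 2 with hεdef
    have hεpos : 0 < ε := by positivity
    have hballY : Metric.closedBall p ε ⊆ Y := fun q hq =>
      hδY (lt_of_le_of_lt (Metric.mem_closedBall.1 hq) (by rw [hεdef]; linarith))
    have hx : ∀ m : ℕ, ∃ xx : EuclideanSpace ℝ (Fin n), (m : ℝ) < ⟪p, xx⟫_ℝ - u xx := by
      intro m
      obtain ⟨y, hy1, hy2⟩ := not_bddAbove_iff.1 hnb m
      obtain ⟨xx, rfl⟩ := hy1
      exact ⟨xx, hy2⟩
    choose xs hxs using hx
    set V : ℕ → Set (EuclideanSpace ℝ (Fin n)) :=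
      fun m => {q | 0 ≤ ⟪q - p, xs m⟫_ℝ} ∩ Metric.ball p ε with hVdef
    have hVmeas : ∀ m, MeasurableSet (V m) := by
      intro m
      exact (measurableSet_le measurable_const
        ((measurable_id.sub measurable_const).inner measurable_const)).inter
        Metric.isOpen_ball.measurableSet
    have hVhalf : ∀ m, volume (Metric.ball p ε) ≤ 2 * volume (V m) := by
      intro m
      set R : EuclideanSpace ℝ (Fin n) → EuclideanSpace ℝ (Fin n) := fun q => p + p - q with hR
      have hRpre : ∀ s : Set (EuclideanSpace ℝ (Fin n)), volume (R ⁻¹' s) = volume s := by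
        intro s
        have he : R ⁻¹' s =
            (fun q : EuclideanSpace ℝ (Fin n) => -q) ⁻¹' ((fun q => p + p + q) ⁻¹' s) := by
          ext q
          simp [hR, sub_eq_add_neg]
        rw [he]
        have hneg : (fun q : EuclideanSpace ℝ (Fin n) => -q) ⁻¹' ((fun q => p + p + q) ⁻¹' s) =
            -((fun q : EuclideanSpace ℝ (Fin n) => p + p + q) ⁻¹' s) := by
          ext q; simp [Set.mem_neg]
        rw [hneg, Measure.measure_neg, measure_preimage_add]
      have hWeq : R ⁻¹' ({q | ⟪q - p, xs m⟫_ℝ ≤ 0} ∩ Metric.ball p ε) = V m := by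
        ext q
        simp only [Set.mem_preimage, Set.mem_inter_iff, Set.mem_setOf_eq, hR, Metric.mem_ball,
          hVdef]
        have e1 : p + p - q - p = -(q - p) := by abel
        have e2 : dist (p + p - q) p = dist q p := by
          rw [dist_eq_norm, dist_eq_norm]
          have : p + p - q - p = -(q - p) := by abel
          rw [this, norm_neg]
        rw [e1, inner_neg_left, e2]
        constructor
        · rintro ⟨h1, h2⟩; exact ⟨by linarith, h2⟩
        · rintro ⟨h1, h2⟩; exact ⟨by linarith, h2⟩
      have hcover : Metric.ball p ε ⊆ V m ∪ ({q | ⟪q - p, xs m⟫_ℝ ≤ 0} ∩ Metric.ball p ε) := by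
        intro q hq
        rcases le_total 0 (⟪q - p, xs m⟫_ℝ) with h | h
        · left; exact ⟨h, hq⟩
        · right; exact ⟨h, hq⟩
      calc volume (Metric.ball p ε)
          ≤ volume (V m) + volume ({q | ⟪q - p, xs m⟫_ℝ ≤ 0} ∩ Metric.ball p ε) :=
            le_trans (measure_mono hcover) (measure_union_le _ _)
        _ = volume (V m) + volume (V m) := by rw [← hWeq, hRpre]
        _ = 2 * volume (V m) := (two_mul _).symm
    set U : ℕ → Set (EuclideanSpace ℝ (Fin n)) := fun N => ⋃ m, ⋃ (_ : N ≤ m), V m with hUdef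
    have hUmeas : ∀ N, MeasurableSet (U N) := fun N =>
      MeasurableSet.iUnion fun m => MeasurableSet.iUnion fun _ => hVmeas m
    have hUanti : Antitone U := by
      intro N1 N2 h q hq
      obtain ⟨m, hm, hqm⟩ := Set.mem_iUnion₂.1 hq
      exact Set.mem_iUnion₂.2 ⟨m, le_trans h hm, hqm⟩
    have hUball : ∀ N, U N ⊆ Metric.ball p ε := by
      intro N q hq
      obtain ⟨m, _, hqm⟩ := Set.mem_iUnion₂.1 hq
      exact hqm.2
    have hUhalf : ∀ N, volume (Metric.ball p ε) ≤ 2 * volume (U N) := by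
      intro N
      refine le_trans (hVhalf N) ?_
      have : V N ⊆ U N := fun q hq => Set.mem_iUnion₂.2 ⟨N, le_refl N, hq⟩
      exact mul_le_mul_right (measure_mono this) 2
    set W := ⋂ N, U N with hWdef
    have hWmeas : MeasurableSet W := MeasurableSet.iInter hUmeas
    have hWY : W ⊆ Y := fun q hq =>
      hballY (Metric.ball_subset_closedBall (hUball 0 (Set.mem_iInter.1 hq 0)))
    have hWhalf : volume (Metric.ball p ε) ≤ 2 * volume W := by
      have hfin : volume (U 0) ≠ ⊤ :=
        ne_top_of_le_ne_top measure_ball_lt_top.ne (measure_mono (hUball 0))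
      have htend : Filter.Tendsto (fun N => volume (U N)) Filter.atTop (nhds (volume W)) :=
        tendsto_measure_iInter_atTop (fun N => (hUmeas N).nullMeasurableSet) hUanti ⟨0, hfin⟩
      have h2 : Filter.Tendsto (fun N => 2 * volume (U N)) Filter.atTop (nhds (2 * volume W)) :=
        ENNReal.Tendsto.const_mul htend (Or.inr (by norm_num))
      exact ge_of_tendsto' h2 hUhalf
    have hWpos : volume W ≠ 0 := by
      intro h0
      rw [h0, mul_zero] at hWhalf
      exact (Metric.measure_ball_pos volume p hεpos).ne' (le_zero_iff.1 hWhalf)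
    have hWnB : ∀ q ∈ W, ¬ BddAbove (Set.range fun z => ⟪q, z⟫_ℝ - u z) := by
      intro q hq hbdd
      obtain ⟨c, hc⟩ := hbdd
      obtain ⟨m0, hm0⟩ := exists_nat_gt c
      have hqU := Set.mem_iInter.1 hq m0
      obtain ⟨m, hmge, hqV⟩ := Set.mem_iUnion₂.1 hqU
      have hdecomp : ⟪q, xs m⟫_ℝ = ⟪p, xs m⟫_ℝ + ⟪q - p, xs m⟫_ℝ := by
        rw [← inner_add_left, add_sub_cancel]
      have hval' : (m : ℝ) < ⟪q, xs m⟫_ℝ - u (xs m) := by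
        have h1 := hxs m
        have h2 : 0 ≤ ⟪q - p, xs m⟫_ℝ := hqV.1
        rw [hdecomp]
        linarith
      have hle : ⟪q, xs m⟫_ℝ - u (xs m) ≤ c := hc ⟨xs m, rfl⟩
      have hcast : (m0 : ℝ) ≤ m := Nat.cast_le.2 hmge
      linarith
    have hTB : ∀ x ∈ Ω, T x ∉ W := by
      intro x hx hTW
      exact hWnB _ hTW (hval x (T x) (hΩ x hx).1).1
    have hμW : μ (T ⁻¹' W) = 0 := by
      have hsub : T ⁻¹' W ⊆ Ωᶜ := fun x hx hxΩ => hTB x hxΩ hx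
      exact measure_mono_null hsub (hμ_of_vol _ hΩc)
    have hνW : ν W = 0 := by rw [hmapν _ hWmeas]; exact hμW
    obtain ⟨lam, Lam, hlam, -, hae⟩ :=
      hGbd (Metric.closedBall p ε) hballY (isCompact_closedBall _ _)
    have hWcb : W ⊆ Metric.closedBall p ε := fun q hq =>
      Metric.ball_subset_closedBall (hUball 0 (Set.mem_iInter.1 hq 0))
    have haeW : ∀ᵐ q ∂(volume.restrict W),
        ENNReal.ofReal lam ≤ ENNReal.ofReal (G q) := by
      have h1 := ae_restrict_of_ae_restrict_of_subset hWcb hae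
      filter_upwards [h1] with q hq
      exact ENNReal.ofReal_le_ofReal hq.1
    have hlow : ENNReal.ofReal lam * volume W ≤ ν W := by
      calc ENNReal.ofReal lam * volume W
          = ∫⁻ _ in W, ENNReal.ofReal lam ∂volume := (setLIntegral_const _ _).symm
        _ ≤ ∫⁻ q in W, ENNReal.ofReal (G q) ∂volume := lintegral_mono_ae haeW
        _ = ν W := by
            rw [hνdef, withDensity_apply _ hWmeas, Measure.restrict_restrict hWmeas,
              Set.inter_eq_self_of_subset_left hWY]
    rw [hνW] at hlow
    have hne : ENNReal.ofReal lam * volume W ≠ 0 := by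
      apply mul_ne_zero
      · rw [Ne, ENNReal.ofReal_eq_zero]
        push_neg
        exact hlam
      · exact hWpos
    exact hne (le_zero_iff.1 hlow)
  -- convexity of ustar on Y
  have hstarconv : ConvexOn ℝ Y ustar := by
    refine ⟨hYconv, fun p hp q hq a b ha hb hab => ?_⟩
    have h1 := hYB p hp
    have h2 := hYB q hq
    show ustar (a • p + b • q) ≤ a • ustar p + b • ustar q
    refine csSup_le (Set.range_nonempty _) ?_
    rintro y ⟨z, rfl⟩
    show ⟪a • p + b • q, z⟫_ℝ - u z ≤ a • ustar p + b • ustar q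
    have e1 : ⟪a • p + b • q, z⟫_ℝ - u z =
        a * (⟪p, z⟫_ℝ - u z) + b * (⟪q, z⟫_ℝ - u z) := by
      rw [inner_add_left, real_inner_smul_left, real_inner_smul_left]
      have : a * u z + b * u z = u z := by rw [← add_mul, hab, one_mul]
      linarith
    rw [e1]
    have hle1 : ⟪p, z⟫_ℝ - u z ≤ ustar p := le_csSup h1 ⟨z, rfl⟩
    have hle2 : ⟪q, z⟫_ℝ - u z ≤ ustar q := le_csSup h2 ⟨z, rfl⟩
    have := add_le_add (mul_le_mul_of_nonneg_left hle1 ha) (mul_le_mul_of_nonneg_left hle2 hb)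
    simpa [smul_eq_mul] using this
  -- a.e. differentiability of ustar on Y
  have hDae : ∀ᵐ pt ∂(volume : Measure (EuclideanSpace ℝ (Fin n))),
      pt ∈ Y → DifferentiableAt ℝ ustar pt := by
    have hll : LocallyLipschitzOn Y ustar := hstarconv.locallyLipschitzOn hYopen
    have hball : ∀ p : EuclideanSpace ℝ (Fin n), p ∈ Y → ∃ r : ℝ, 0 < r ∧
        ∀ᵐ q ∂(volume : Measure (EuclideanSpace ℝ (Fin n))),
          q ∈ Metric.ball p r → DifferentiableAt ℝ ustar q := by
      intro p hp
      obtain ⟨K, t, ht, hlip⟩ := hll hp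
      obtain ⟨r1, hr1, hr1Y⟩ := Metric.isOpen_iff.1 hYopen p hp
      obtain ⟨r2, hr2, hr2t⟩ := Metric.mem_nhdsWithin_iff.1 ht
      refine ⟨min r1 r2, lt_min hr1 hr2, ?_⟩
      have hsub : Metric.ball p (min r1 r2) ⊆ t := fun q hq =>
        hr2t ⟨Metric.ball_subset_ball (min_le_right _ _) hq,
          hr1Y (Metric.ball_subset_ball (min_le_left _ _) hq)⟩
      have hlip' : LipschitzOnWith K ustar (Metric.ball p (min r1 r2)) := hlip.mono hsub
      obtain ⟨gext, hgl, hge⟩ := hlip'.extend_real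
      filter_upwards [hgl.ae_differentiableAt] with q hqd hqb
      have hev : ustar =ᶠ[nhds q] gext :=
        Filter.eventuallyEq_of_mem (Metric.isOpen_ball.mem_nhds hqb) hge
      exact hev.differentiableAt_iff.2 hqd
    choose! r hrpos hrae using hball
    obtain ⟨tt, htt_count, htt_eq⟩ := TopologicalSpace.isOpen_iUnion_countable
      (fun p : ↥Y => Metric.ball (p : EuclideanSpace ℝ (Fin n)) (r p))
      (fun p => Metric.isOpen_ball)
    have hcover : Y ⊆ ⋃ p ∈ tt, Metric.ball (p : EuclideanSpace ℝ (Fin n)) (r p) := by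
      rw [htt_eq]
      intro q hq
      exact Set.mem_iUnion.2 ⟨⟨q, hq⟩, Metric.mem_ball_self (hrpos q hq)⟩
    have hae : ∀ᵐ q ∂(volume : Measure (EuclideanSpace ℝ (Fin n))),
        ∀ p ∈ tt, q ∈ Metric.ball (p : EuclideanSpace ℝ (Fin n)) (r p) →
          DifferentiableAt ℝ ustar q :=
      (ae_ball_iff htt_count).2 fun p _ => hrae p p.2
    filter_upwards [hae] with q hq hqY
    obtain ⟨p, hpt, hqb⟩ := Set.mem_iUnion₂.1 (hcover hqY)
    exact hq p hpt hqb
  -- the inverse map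
  set S : EuclideanSpace ℝ (Fin n) → EuclideanSpace ℝ (Fin n) :=
    fun pt => gradient ustar pt with hSdef
  have hSmeas : Measurable S := by
    rw [hSdef]
    unfold gradient
    exact (LinearIsometryEquiv.continuous _).measurable.comp (measurable_fderiv ℝ ustar)
  have hSkey : ∀ pt x, pt ∈ Y → DifferentiableAt ℝ ustar pt →
      pt ∈ subdifferential u x → S pt = x := by
    intro pt x hptY hdiff hsubpt
    refine aux_gradient_eq_of_local_subgrad hdiff ?_
    filter_upwards [hYopen.mem_nhds hptY] with w hw
    exact hsubstar x pt w hsubpt (hYB w hw)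
  set D := {pt : EuclideanSpace ℝ (Fin n) | DifferentiableAt ℝ ustar pt} with hDdef
  have hDmeas : MeasurableSet D := measurableSet_of_differentiableAt ℝ ustar
  have hsubSmeas : MeasurableSet {pt : EuclideanSpace ℝ (Fin n) |
      pt ∈ subdifferential u (S pt)} := by
    obtain ⟨e, he⟩ : ∃ e : ℕ → EuclideanSpace ℝ (Fin n), DenseRange e :=
      ⟨TopologicalSpace.denseSeq _, TopologicalSpace.denseRange_denseSeq _⟩
    have hkey : {pt : EuclideanSpace ℝ (Fin n) | pt ∈ subdifferential u (S pt)} =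
        ⋂ k : ℕ, {pt | u (S pt) + ⟪pt, e k - S pt⟫_ℝ ≤ u (e k)} := by
      ext pt
      simp only [Set.mem_iInter, Set.mem_setOf_eq]
      constructor
      · intro h k
        exact h (e k)
      · intro h w
        obtain ⟨ws, hwmem, hwt⟩ := mem_closure_iff_seq_limit.1 (he w)
        choose k hk using hwmem
        have hseq : ∀ j, u (S pt) + ⟪pt, ws j - S pt⟫_ℝ ≤ u (ws j) := by
          intro j
          rw [← hk j]
          exact h (k j)
        have hcont : Continuous fun y : EuclideanSpace ℝ (Fin n) =>
            u (S pt) + ⟪pt, y - S pt⟫_ℝ :=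
          continuous_const.add (continuous_const.inner (continuous_id.sub continuous_const))
        have hl : Filter.Tendsto (fun j => u (S pt) + ⟪pt, ws j - S pt⟫_ℝ) Filter.atTop
            (nhds (u (S pt) + ⟪pt, w - S pt⟫_ℝ)) := (hcont.tendsto w).comp hwt
        have hr : Filter.Tendsto (fun j => u (ws j)) Filter.atTop (nhds (u w)) :=
          (hu_cont.tendsto w).comp hwt
        exact le_of_tendsto_of_tendsto' hl hr hseq
    rw [hkey]
    refine MeasurableSet.iInter fun k => ?_
    have hml : Measurable fun pt : EuclideanSpace ℝ (Fin n) =>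
        u (S pt) + ⟪pt, e k - S pt⟫_ℝ :=
      ((hu_cont.measurable).comp hSmeas).add
        (measurable_id.inner (measurable_const.sub hSmeas))
    exact measurableSet_le hml measurable_const
  set G₀ := Y ∩ D ∩ {pt : EuclideanSpace ℝ (Fin n) | pt ∈ subdifferential u (S pt)}
    with hG₀def
  have hG₀meas : MeasurableSet G₀ := (hYopen.measurableSet.inter hDmeas).inter hsubSmeas
  have hYD : volume (Y \ D) = 0 := by
    have h := ae_iff.1 hDae
    have he : Y \ D = {a | ¬ (a ∈ Y → DifferentiableAt ℝ ustar a)} := by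
      ext a
      simp [hDdef, Classical.not_imp, Set.mem_diff]
    rw [he]
    exact h
  -- μ-a.e., T x lands in G₀ and S (T x) = x
  have hμaeT : ∀ᵐ x ∂μ, T x ∈ G₀ ∧ S (T x) = x := by
    have h1 : ∀ᵐ x ∂μ, x ∈ Ω := by
      rw [ae_iff]
      exact hμ_of_vol _ hΩc
    have h2 : ∀ᵐ x ∂μ, T x ∈ Y := by
      rw [ae_iff]
      have he : {x | ¬ T x ∈ Y} = T ⁻¹' Yᶜ := rfl
      rw [he, ← hmapν _ hYopen.measurableSet.compl]
      exact hνYc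
    have h3 : ∀ᵐ x ∂μ, ¬ (T x ∈ Y \ D) := by
      rw [ae_iff]
      have he : {x | ¬ ¬ (T x ∈ Y \ D)} = T ⁻¹' (Y \ D) := by
        ext x; simp
      rw [he, ← hmapν _ (hYopen.measurableSet.diff hDmeas)]
      exact hνnull _ (hYopen.measurableSet.diff hDmeas)
        (by rw [Set.inter_eq_self_of_subset_left Set.diff_subset]; exact hYD)
    filter_upwards [h1, h2, h3] with x hx1 hx2 hx3
    have hxD : T x ∈ D := by
      by_contra h
      exact hx3 ⟨hx2, h⟩
    have hsubx : T x ∈ subdifferential u x := (hΩ x hx1).1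
    have hSx : S (T x) = x := hSkey _ _ hx2 hxD hsubx
    refine ⟨⟨⟨hx2, hxD⟩, ?_⟩, hSx⟩
    show T x ∈ subdifferential u (S (T x))
    rw [hSx]
    exact hsubx
  have hG₀c : volume (Y \ G₀) = 0 := by
    set Z := Y ∩ D ∩ {pt : EuclideanSpace ℝ (Fin n) | pt ∈ subdifferential u (S pt)}ᶜ
      with hZdef
    have hZmeas : MeasurableSet Z := (hYopen.measurableSet.inter hDmeas).inter hsubSmeas.compl
    have hsplit : Y \ G₀ ⊆ (Y \ D) ∪ Z := by
      intro q hq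
      by_cases hD : q ∈ D
      · right
        refine ⟨⟨hq.1, hD⟩, ?_⟩
        intro hc
        exact hq.2 ⟨⟨hq.1, hD⟩, hc⟩
      · left
        exact ⟨hq.1, hD⟩
    refine measure_mono_null hsplit (measure_union_null hYD ?_)
    refine hνvol Z hZmeas (fun q hq => hq.1.1) ?_
    rw [hmapν _ hZmeas]
    have hae2 : ∀ᵐ x ∂μ, ¬ (T x ∈ Z) := by
      filter_upwards [hμaeT] with x hx hc
      exact hc.2 hx.1.2
    have h := ae_iff.1 hae2
    simp only [not_not] at h
    exact h
  -- positivity of G ∘ T a.e.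
  have hGT_pos : ∀ᵐ x ∂(volume : Measure (EuclideanSpace ℝ (Fin n))), 0 < G (T x) := by
    set Z2 := Y ∩ {q : EuclideanSpace ℝ (Fin n) | ¬ 0 < G q} with hZ2def
    have hZ2meas : MeasurableSet Z2 :=
      hYopen.measurableSet.inter (measurableSet_lt measurable_const hGmeas).compl
    have hZ2vol : volume Z2 = 0 := by
      have h := ae_iff.1 hG_posY
      have he : Z2 = {a | ¬ (a ∈ Y → 0 < G a)} := by
        ext a
        simp [hZ2def, Classical.not_imp]
      rw [he]
      exact h
    have hνZ2 : ν Z2 = 0 :=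
      hνnull _ hZ2meas (measure_mono_null Set.inter_subset_left hZ2vol)
    have hμZ2 : μ (T ⁻¹' Z2) = 0 := by rw [← hmapν _ hZ2meas]; exact hνZ2
    have hvolZ2 : volume (T ⁻¹' Z2) = 0 := hvol_of_μ _ hμZ2
    have hnotin : ∀ᵐ x ∂(volume : Measure (EuclideanSpace ℝ (Fin n))), ¬ (T x ∈ Z2) := by
      rw [ae_iff]
      simp only [not_not]
      exact hvolZ2
    filter_upwards [hTY_ae, hnotin] with x h1 h2
    by_contra h
    exact h2 ⟨h1, h⟩
  -- final computation
  intro A hA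
  set EA := G₀ ∩ S ⁻¹' A with hEAdef
  have hEAmeas : MeasurableSet EA := hG₀meas.inter (hSmeas hA)
  have hEAY : EA ⊆ Y := fun q hq => hq.1.1.1
  have h1 : EA ⊆ ⋃ x ∈ A, subdifferential u x := by
    intro q hq
    exact Set.mem_biUnion hq.2 hq.1.2
  have h2 : (⋃ x ∈ A, subdifferential u x) ⊆ EA ∪ ((closure Y \ Y) ∪ (Y \ G₀)) := by
    intro q hq
    obtain ⟨x, hxA, hqx⟩ := Set.mem_iUnion₂.1 hq
    have hcl : q ∈ closure Y := hrange x hqx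
    by_cases hqY : q ∈ Y
    · by_cases hqG : q ∈ G₀
      · left
        refine ⟨hqG, ?_⟩
        have hSq : S q = x := hSkey q x hqY hqG.1.2 hqx
        show q ∈ S ⁻¹' A
        rw [Set.mem_preimage, hSq]
        exact hxA
      · right; right; exact ⟨hqY, hqG⟩
    · right; left; exact ⟨hcl, hqY⟩
  have hnull2 : volume ((closure Y \ Y) ∪ (Y \ G₀)) = 0 := by
    refine measure_union_null ?_ hG₀c
    have hfr : closure Y \ Y ⊆ frontier Y := by
      rw [frontier, hYopen.interior_eq]
    exact measure_mono_null hfr (hYconv.addHaar_frontier volume)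
  have hvol_eq : volume (⋃ x ∈ A, subdifferential u x) = volume EA := by
    refine le_antisymm ?_ (measure_mono h1)
    calc volume (⋃ x ∈ A, subdifferential u x)
        ≤ volume (EA ∪ ((closure Y \ Y) ∪ (Y \ G₀))) := measure_mono h2
      _ ≤ volume EA + volume ((closure Y \ Y) ∪ (Y \ G₀)) := measure_union_le _ _
      _ = volume EA := by rw [hnull2, add_zero]
  rw [hvol_eq]
  -- volume EA = ∫⁻ in EA, (ofReal (G q))⁻¹ dν
  have hstep1 : volume EA = ∫⁻ q in EA, (ENNReal.ofReal (G q))⁻¹ ∂ν := by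
    have hres : ν.restrict EA = (volume.restrict EA).withDensity
        (fun y => ENNReal.ofReal (G y)) := by
      rw [hνdef, restrict_withDensity hEAmeas, Measure.restrict_restrict hEAmeas,
        Set.inter_eq_self_of_subset_left hEAY]
    have hGpos_EA : ∀ᵐ q ∂(volume.restrict EA), 0 < G q := by
      filter_upwards [ae_restrict_of_ae hG_posY, ae_restrict_mem hEAmeas] with q ha hb
      exact ha (hEAY hb)
    calc volume EA = ∫⁻ _ in EA, 1 ∂volume := by
          rw [setLIntegral_const, one_mul]
      _ = ∫⁻ q in EA, ENNReal.ofReal (G q) * (ENNReal.ofReal (G q))⁻¹ ∂volume := by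
          refine lintegral_congr_ae ?_
          filter_upwards [hGpos_EA] with q hq
          rw [ENNReal.mul_inv_cancel (by rw [Ne, ENNReal.ofReal_eq_zero]; push_neg; exact hq)
            ENNReal.ofReal_ne_top]
      _ = ∫⁻ q, (ENNReal.ofReal (G q))⁻¹
            ∂((volume.restrict EA).withDensity (fun y => ENNReal.ofReal (G y))) := by
          rw [lintegral_withDensity_eq_lintegral_mul _ hGm' (g := fun q => (ENNReal.ofReal (G q))⁻¹) hGm'.inv]
          rfl
      _ = ∫⁻ q in EA, (ENNReal.ofReal (G q))⁻¹ ∂ν := by rw [← hres]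
  have hstep2 : ∫⁻ q in EA, (ENNReal.ofReal (G q))⁻¹ ∂ν
      = ∫⁻ x in T ⁻¹' EA, (ENNReal.ofReal (G (T x)))⁻¹ ∂μ := by
    rw [← hpush, setLIntegral_map (f := fun q => (ENNReal.ofReal (G q))⁻¹) hEAmeas hGm'.inv hTmeas]
  have hstep3 : ∫⁻ x in T ⁻¹' EA, (ENNReal.ofReal (G (T x)))⁻¹ ∂μ
      = ∫⁻ x in A, (ENNReal.ofReal (G (T x)))⁻¹ ∂μ := by
    rw [← lintegral_indicator (hTmeas hEAmeas), ← lintegral_indicator hA]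
    refine lintegral_congr_ae ?_
    filter_upwards [hμaeT] with x hx
    obtain ⟨hG0, hSx⟩ := hx
    by_cases hxA : x ∈ A
    · rw [Set.indicator_of_mem hxA, Set.indicator_of_mem]
      rw [Set.mem_preimage]
      refine ⟨hG0, ?_⟩
      rw [Set.mem_preimage, hSx]
      exact hxA
    · rw [Set.indicator_of_notMem hxA, Set.indicator_of_notMem]
      intro hc
      apply hxA
      have hc' : T x ∈ EA := hc
      have h2 := hc'.2
      rw [Set.mem_preimage, hSx] at h2
      exact h2
  have hstep4 : ∫⁻ x in A, (ENNReal.ofReal (G (T x)))⁻¹ ∂μ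
      = ∫⁻ x in A, ENNReal.ofReal (F x / G (T x)) ∂volume := by
    have hGTm : Measurable fun x : EuclideanSpace ℝ (Fin n) =>
        (ENNReal.ofReal (G (T x)))⁻¹ := (hGm'.comp hTmeas).inv
    rw [hμdef, restrict_withDensity hA,
      lintegral_withDensity_eq_lintegral_mul _ hFm' hGTm]
    refine lintegral_congr_ae ?_
    filter_upwards [ae_restrict_of_ae hGT_pos] with x hx
    show ENNReal.ofReal (F x) * (ENNReal.ofReal (G (T x)))⁻¹ = ENNReal.ofReal (F x / G (T x))
    rw [ENNReal.ofReal_div_of_pos hx, div_eq_mul_inv]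
  rw [hstep1, hstep2, hstep3, hstep4]
end

section
/- Let n ≥ 1 and let Y ⊆ ℝⁿ be a nonempty open convex set. Let F : ℝⁿ → ℝ be a Borel function with F > 0 a.e. on ℝⁿ and ∫_{ℝⁿ} F dx = 1, and let G : ℝⁿ → ℝ be a nonnegative Borel function with G > 0 a.e. on Y and ∫_Y G dy = 1. Let u : ℝⁿ → ℝ be a convex function whose a.e.-defined gradient ∇u pushes F dx forward to 1_Y G dy. Then the subdifferential image satisfies ∂u(ℝⁿ) ⊆ closure(Y), and the Lebesgue measure of Y \ ∂u(ℝⁿ) is zero. -/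
open MeasureTheory Set
open scoped InnerProductSpace ENNReal

lemma grad_subgrad {n : ℕ} {u : EuclideanSpace ℝ (Fin n) → ℝ}
    (hu : ConvexOn ℝ Set.univ u) {x g : EuclideanSpace ℝ (Fin n)}
    (h : HasGradientAt u g x) (z : EuclideanSpace ℝ (Fin n)) :
    u x + ⟪g, z - x⟫_ℝ ≤ u z := by
  have hc : HasDerivAt (fun t : ℝ => x + t • (z - x)) (z - x) 0 := by
    simpa using ((hasDerivAt_id (0:ℝ)).smul_const (z - x)).const_add x
  have hφ : HasDerivAt (fun t : ℝ => u (x + t • (z - x))) ⟪g, z - x⟫_ℝ 0 := by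
    have h' : HasFDerivAt u ((InnerProductSpace.toDual ℝ (EuclideanSpace ℝ (Fin n))) g)
        ((fun t : ℝ => x + t • (z - x)) 0) := by simpa using h.hasFDerivAt
    have := h'.comp_hasDerivAt (0:ℝ) hc
    have h2 : HasDerivAt (u ∘ fun t : ℝ => x + t • (z - x)) ⟪g, z - x⟫_ℝ 0 := by
      simpa [InnerProductSpace.toDual_apply_apply] using this
    exact h2
  have hslope : Filter.Tendsto (slope (fun t : ℝ => u (x + t • (z - x))) 0)
      (nhdsWithin 0 (Set.Ioi 0)) (nhds ⟪g, z - x⟫_ℝ) := by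
    refine (hasDerivAt_iff_tendsto_slope.mp hφ).mono_left (nhdsWithin_mono _ ?_)
    intro t ht
    exact ne_of_gt ht
  have hle : ⟪g, z - x⟫_ℝ ≤ u z - u x := by
    refine le_of_tendsto hslope ?_
    filter_upwards [Ioc_mem_nhdsGT_of_mem (Set.left_mem_Ico.mpr zero_lt_one)] with t ht
    have ht0 : (0:ℝ) < t := ht.1
    have hcvx := hu.2 (Set.mem_univ x) (Set.mem_univ z)
      (show (0:ℝ) ≤ 1 - t by have := ht.2; linarith) ht0.le
      (show (1 - t) + t = 1 by ring)
    have hpt : (1 - t) • x + t • z = x + t • (z - x) := by module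
    rw [hpt] at hcvx
    simp only [smul_eq_mul] at hcvx
    rw [slope_def_field]
    have : (u (x + t • (z - x)) - u (x + 0 • (z - x))) / (t - 0) ≤ u z - u x := by
      rw [div_le_iff₀ (by linarith)]
      simp only [zero_smul, add_zero, sub_zero]
      nlinarith
    simpa using this
  linarith


lemma exists_coord_big {n : ℕ} (hn : 1 ≤ n) (w : EuclideanSpace ℝ (Fin n)) :
    ∃ i : Fin n, ‖w‖ ≤ Real.sqrt n * |w i| := by
  have hne : (Finset.univ : Finset (Fin n)).Nonempty := by
    simpa [Finset.univ_nonempty_iff] using Fin.pos_iff_nonempty.mp hn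
  obtain ⟨i, -, hi⟩ := Finset.exists_max_image Finset.univ (fun j => |w j|) hne
  refine ⟨i, ?_⟩
  have h1 : ‖w‖ ^ 2 ≤ (n : ℝ) * |w i| ^ 2 := by
    rw [EuclideanSpace.norm_eq, Real.sq_sqrt (by positivity)]
    calc ∑ j, ‖w j‖ ^ 2 ≤ ∑ _j : Fin n, |w i| ^ 2 := by
          refine Finset.sum_le_sum fun j _ => ?_
          have := hi j (Finset.mem_univ j)
          have h := abs_nonneg (w j)
          rw [Real.norm_eq_abs]
          nlinarith
      _ = (n : ℝ) * |w i| ^ 2 := by simp [mul_comm]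
  have h2 : (Real.sqrt n * |w i|) ^ 2 = (n : ℝ) * |w i| ^ 2 := by
    rw [mul_pow, Real.sq_sqrt (by positivity)]
  nlinarith [norm_nonneg w, Real.sqrt_nonneg (n:ℝ), abs_nonneg (w i),
    mul_nonneg (Real.sqrt_nonneg (n:ℝ)) (abs_nonneg (w i))]

lemma mem_iUnion_subdiff_of_dense {n : ℕ} (hn : 1 ≤ n)
    {u : EuclideanSpace ℝ (Fin n) → ℝ} (hu : ConvexOn ℝ Set.univ u)
    {Y : Set (EuclideanSpace ℝ (Fin n))} (hYopen : IsOpen Y)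
    {y : EuclideanSpace ℝ (Fin n)} (hy : y ∈ Y)
    (hdense : ∀ U : Set (EuclideanSpace ℝ (Fin n)), IsOpen U → U.Nonempty → U ⊆ Y →
      ∃ q x', q ∈ U ∧ q ∈ subdifferential u x') :
    y ∈ ⋃ x, subdifferential u x := by
  classical
  have hcont : Continuous u := by
    rw [← continuousOn_univ]
    exact ConvexOn.continuousOn isOpen_univ hu
  obtain ⟨ρ, hρ0, hball⟩ := Metric.isOpen_iff.mp hYopen y hy
  have hsn : (1:ℝ) ≤ Real.sqrt n := by
    rw [show (1:ℝ) = Real.sqrt 1 by simp]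
    exact Real.sqrt_le_sqrt (by exact_mod_cast hn)
  have hsn0 : (0:ℝ) < Real.sqrt n := lt_of_lt_of_le one_pos hsn
  set ε : ℝ := ρ / (4 * Real.sqrt n) with hεdef
  have hε0 : 0 < ε := by positivity
  have hε4 : ε ≤ ρ / 4 := by
    rw [hεdef, div_le_div_iff₀ (by positivity) (by positivity)]
    nlinarith
  -- centers
  set e : Fin n → EuclideanSpace ℝ (Fin n) := fun i => EuclideanSpace.single i 1 with he
  set c : Fin n → Bool → EuclideanSpace ℝ (Fin n) :=
    fun i s => y + (if s then ρ/2 else -(ρ/2)) • e i with hc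
  have hkey : ∀ i : Fin n, ∀ s : Bool, ∃ q x', ‖q - c i s‖ < ε ∧ q ∈ subdifferential u x' := by
    intro i s
    have hU : Metric.ball (c i s) ε ⊆ Y := by
      intro v hv
      apply hball
      have h1 : ‖c i s - y‖ = ρ / 2 := by
        have hcy : c i s - y = (if s then ρ/2 else -(ρ/2)) • e i := by
          simp [hc]
        have he1 : ‖e i‖ = 1 := by
          simp [he, EuclideanSpace.norm_single]
        rw [hcy, norm_smul, he1, mul_one]
        rcases s with _ | _ <;>
          simp [Real.norm_eq_abs, abs_neg, abs_of_pos hρ0, abs_div, abs_of_pos (half_pos hρ0)]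
      rw [Metric.mem_ball, dist_eq_norm] at hv ⊢
      calc ‖v - y‖ ≤ ‖v - c i s‖ + ‖c i s - y‖ := norm_sub_le_norm_sub_add_norm_sub _ _ _
        _ < ε + ρ/2 := by rw [h1]; linarith
        _ < ρ := by linarith
    obtain ⟨q, x', hqU, hqsub⟩ := hdense (Metric.ball (c i s) ε) Metric.isOpen_ball
      ⟨c i s, Metric.mem_ball_self hε0⟩ hU
    exact ⟨q, x', by rwa [Metric.mem_ball, dist_eq_norm] at hqU, hqsub⟩
  choose q xx hqc hqsub using hkey
  -- constants
  set Cst : Fin n → Bool → ℝ :=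
    fun i s => u (xx i s) - ⟪q i s, xx i s⟫_ℝ + ⟪q i s - y, y⟫_ℝ with hCst
  have hFinNe : (Finset.univ : Finset (Fin n × Bool)).Nonempty :=
    ⟨(⟨0, hn⟩, true), Finset.mem_univ _⟩
  set m : ℝ := Finset.inf' Finset.univ hFinNe (fun p : Fin n × Bool => Cst p.1 p.2) with hm
  -- lower bound for h z := u z - ⟪y, z⟫
  have hlow : ∀ z, m + ε * ‖z - y‖ ≤ u z - ⟪y, z⟫_ℝ := by
    intro z
    set w := z - y with hw
    obtain ⟨i, hi⟩ := exists_coord_big hn w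
    set s : Bool := decide (0 ≤ w i) with hs
    have hcoord : (if s then ρ/2 else -(ρ/2)) * w i = ρ/2 * |w i| := by
      rcases le_or_gt 0 (w i) with h | h
      · simp [hs, h, abs_of_nonneg h]
      · simp [hs, not_le.mpr h, abs_of_neg h]
    have hinner_c : ⟪c i s - y, w⟫_ℝ = ρ/2 * |w i| := by
      simp only [hc, add_sub_cancel_left, real_inner_smul_left, he]
      rw [← hcoord]
      congr 1
      have := EuclideanSpace.inner_single_left (𝕜 := ℝ) i 1 (z - y)
      simpa [hw] using this
    have hlb : ε * ‖z - y‖ ≤ ⟪q i s - y, w⟫_ℝ := by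
      have hsplit : ⟪q i s - y, w⟫_ℝ
          = ⟪c i s - y, w⟫_ℝ + ⟪q i s - c i s, w⟫_ℝ := by
        rw [← inner_add_left]
        congr 1
        abel
      have habs : |⟪q i s - c i s, w⟫_ℝ| ≤ ‖q i s - c i s‖ * ‖z - y‖ :=
        abs_real_inner_le_norm _ _
      have h1 : -(ε * ‖z - y‖) ≤ ⟪q i s - c i s, w⟫_ℝ := by
        have := (abs_le.mp habs).1
        have h2 : ‖q i s - c i s‖ * ‖z - y‖ ≤ ε * ‖z - y‖ :=
          mul_le_mul_of_nonneg_right (hqc i s).le (norm_nonneg _)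
        linarith
      have h3 : ρ/2 * |w i| ≥ 2 * ε * ‖z - y‖ := by
        have h4 : ‖z - y‖ ≤ Real.sqrt n * |w i| := hi
        have : 2 * ε * Real.sqrt n = ρ / 2 := by
          field_simp [hεdef]
          rw [hεdef]; field_simp [hsn0.ne']; norm_num
        nlinarith [abs_nonneg (w i)]
      rw [hsplit, hinner_c]
      linarith
    have hsubg := hqsub i s z
    have hexp : ⟪q i s, z - xx i s⟫_ℝ
        = ⟪q i s - y, w⟫_ℝ + ⟪q i s - y, y⟫_ℝ + ⟪y, z⟫_ℝ - ⟪q i s, xx i s⟫_ℝ := by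
      rw [hw]
      simp only [inner_sub_left, inner_sub_right]
      ring
    have hmle : m ≤ Cst i s := Finset.inf'_le _ (Finset.mem_univ (i, s))
    rw [hexp] at hsubg
    simp only [hCst] at hmle
    linarith
  -- attainment
  set h : EuclideanSpace ℝ (Fin n) → ℝ := fun z => u z - ⟪y, z⟫_ℝ with hh
  have hhy : m ≤ h y := by have := hlow y; simpa [hh] using this
  set R : ℝ := (h y - m) / ε + 1 with hR
  have hR0 : 0 < R := by
    rw [hR]
    linarith [div_nonneg (sub_nonneg.mpr hhy) hε0.le]
  have hhcont : Continuous h := hcont.sub (continuous_const.inner continuous_id)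
  obtain ⟨x₀, hx₀K, hminK⟩ := (isCompact_closedBall y R).exists_isMinOn
    ⟨y, Metric.mem_closedBall_self hR0.le⟩ hhcont.continuousOn
  have hmin : ∀ z, h x₀ ≤ h z := by
    intro z
    by_cases hz : z ∈ Metric.closedBall y R
    · exact hminK hz
    · have hzR : R < ‖z - y‖ := by
        rw [Metric.mem_closedBall, not_le, dist_eq_norm] at hz
        exact hz
      have h1 : m + ε * ‖z - y‖ ≤ h z := hlow z
      have h2 : h x₀ ≤ h y := hminK (Metric.mem_closedBall_self hR0.le)
      have h3 : m + ε * R ≤ m + ε * ‖z - y‖ := by nlinarith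
      have h4 : ε * R = (h y - m) + ε := by
        rw [hR]
        field_simp
      linarith
  refine mem_iUnion.mpr ⟨x₀, fun z => ?_⟩
  have := hmin z
  simp only [hh] at this
  have hexp : ⟪y, z - x₀⟫_ℝ = ⟪y, z⟫_ℝ - ⟪y, x₀⟫_ℝ := inner_sub_right _ _ _
  linarith

set_option maxHeartbeats 1000000 in
/-- **The key property (subgradimage) of Step 3 of the proof of Theorem 1, case X = ℝⁿ**
(Caffarelli's lemma extended to unbounded domains). If `Y` is a nonempty open convex set,
`F > 0` a.e. on `ℝⁿ` with `∫ F = 1`, `G ≥ 0` with `G > 0` a.e. on `Y` and `∫_Y G = 1`, and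
the a.e.-defined gradient of the convex function `u` pushes `F dx` forward to `1_Y G dy`,
then `∂u(ℝⁿ) ⊆ closure Y` and `|Y \ ∂u(ℝⁿ)| = 0`. -/
theorem subdifferential_image_subset_closure_and_full_measure
    (n : ℕ) (hn : 1 ≤ n)
    (Y : Set (EuclideanSpace ℝ (Fin n)))
    (hYne : Y.Nonempty) (hYopen : IsOpen Y) (hYconv : Convex ℝ Y)
    (F G : EuclideanSpace ℝ (Fin n) → ℝ)
    (hFmeas : Measurable F) (hGmeas : Measurable G)
    (hFpos : ∀ᵐ x ∂(volume : Measure (EuclideanSpace ℝ (Fin n))), 0 < F x)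
    (hGnn : ∀ y, 0 ≤ G y)
    (hGpos : ∀ᵐ y ∂(volume.restrict Y), 0 < G y)
    (hF1 : ∫ x, F x = 1)
    (hG1 : ∫ y in Y, G y = 1)
    (u : EuclideanSpace ℝ (Fin n) → ℝ)
    (hu : ConvexOn ℝ Set.univ u)
    (T : EuclideanSpace ℝ (Fin n) → EuclideanSpace ℝ (Fin n))
    (hTmeas : Measurable T)
    (hTgrad : ∀ᵐ x ∂(volume : Measure (EuclideanSpace ℝ (Fin n))), HasGradientAt u (T x) x)
    (hpush : Measure.map T (volume.withDensity (fun x => ENNReal.ofReal (F x)))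
      = (volume.restrict Y).withDensity (fun y => ENNReal.ofReal (G y))) :
    (⋃ x, subdifferential u x) ⊆ closure Y ∧
    volume (Y \ ⋃ x, subdifferential u x) = 0 := by
  classical
  set μ := volume.withDensity (fun x => ENNReal.ofReal (F x)) with hμdef
  set ν := (volume.restrict Y).withDensity (fun y => ENNReal.ofReal (G y)) with hνdef
  have hcont : Continuous u := by
    rw [← continuousOn_univ]
    exact ConvexOn.continuousOn isOpen_univ hu
  -- null transfer from μ to volume
  have hFae : ∀ A : Set (EuclideanSpace ℝ (Fin n)), μ A = 0 → volume A = 0 := by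
    intro A hA
    have h1 : volume ({x | ENNReal.ofReal (F x) ≠ 0} ∩ A) = 0 :=
      (withDensity_apply_eq_zero hFmeas.ennreal_ofReal).mp hA
    have h2 : volume {x | ¬ 0 < F x} = 0 := ae_iff.mp hFpos
    refine measure_mono_null (fun x hx => ?_) (measure_union_null h1 h2)
    by_cases hfx : 0 < F x
    · exact Or.inl ⟨by simp [ENNReal.ofReal_eq_zero, not_le, hfx], hx⟩
    · exact Or.inr hfx
  obtain ⟨N, hNsub, hNmeas, hNnull⟩ := exists_measurable_superset_of_null (ae_iff.mp hTgrad)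
  have hmap : ∀ A : Set (EuclideanSpace ℝ (Fin n)), MeasurableSet A → μ (T ⁻¹' A) = ν A := by
    intro A hA
    rw [← hpush, Measure.map_apply hTmeas hA]
  have hνYc : ν Yᶜ = 0 := by
    rw [hνdef, withDensity_apply _ hYopen.measurableSet.compl,
      Measure.restrict_restrict hYopen.measurableSet.compl, compl_inter_self,
      Measure.restrict_empty, lintegral_zero_measure]
  have hTY : volume (T ⁻¹' Yᶜ) = 0 :=
    hFae _ (by rw [hmap _ hYopen.measurableSet.compl]; exact hνYc)
  set S := Nᶜ ∩ T ⁻¹' Y with hSdef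
  have hSc : volume Sᶜ = 0 := by
    rw [hSdef, compl_inter, compl_compl]
    exact measure_union_null hNnull (by rw [← preimage_compl]; exact hTY)
  have hSgrad : ∀ x ∈ S, HasGradientAt u (T x) x := by
    intro x hx
    by_contra hcg
    exact hx.1 (hNsub hcg)
  have hμSc : μ Sᶜ = 0 := withDensity_absolutelyContinuous volume _ hSc
  -- density of T '' S in Y
  have hdense : ∀ U : Set (EuclideanSpace ℝ (Fin n)), IsOpen U → U.Nonempty → U ⊆ Y →
      ∃ x ∈ S, T x ∈ U := by
    intro U hUo hUne hUY
    have hνU : 0 < ν U := by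
      rcases (show (0:ℝ≥0∞) ≤ ν U from zero_le).lt_or_eq with h | h
      · exact h
      have hc0 : ν U = 0 := h.symm
      rw [hνdef, withDensity_apply _ hUo.measurableSet,
        Measure.restrict_restrict hUo.measurableSet,
        inter_eq_self_of_subset_left hUY] at hc0
      have hG0 := (lintegral_eq_zero_iff hGmeas.ennreal_ofReal).mp hc0
      have hGposU : ∀ᵐ x ∂(volume.restrict U), 0 < G x :=
        ae_restrict_of_ae_restrict_of_subset hUY hGpos
      have hfalse : ∀ᵐ x ∂(volume.restrict U), False := by
        filter_upwards [hG0, hGposU] with x h1 h2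
        simp only [Pi.zero_apply, ENNReal.ofReal_eq_zero] at h1
        linarith
      have hU0 : volume U = 0 := by
        have h5 := ae_iff.mp hfalse
        simpa using h5
      exact absurd hU0 (hUo.measure_pos volume hUne).ne'
    have hμ' : 0 < μ (T ⁻¹' U) := by rw [hmap _ hUo.measurableSet]; exact hνU
    by_contra hcc
    push_neg at hcc
    have hsub : T ⁻¹' U ⊆ Sᶜ := by
      intro x hx hxS
      exact hcc x hxS hx
    exact absurd (measure_mono_null hsub hμSc) hμ'.ne'
  have hY_sub : Y ⊆ ⋃ x, subdifferential u x := by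
    intro y hy
    refine mem_iUnion_subdiff_of_dense hn hu hYopen hy ?_
    intro U hUo hUne hUY
    obtain ⟨x, hxS, hTx⟩ := hdense U hUo hUne hUY
    exact ⟨T x, x, hTx, fun z => grad_subgrad hu (hSgrad x hxS) z⟩
  constructor
  · -- Part 1
    intro p hp
    rw [mem_iUnion] at hp
    obtain ⟨x₀, hpx₀⟩ := hp
    by_contra hpc
    obtain ⟨f, cc, hfY, hfp⟩ :=
      geometric_hahn_banach_closed_point hYconv.closure isClosed_closure hpc
    set v := (InnerProductSpace.toDual ℝ (EuclideanSpace ℝ (Fin n))).symm f with hvdef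
    have hfv : ∀ w, ⟪v, w⟫_ℝ = f w := fun w => InnerProductSpace.toDual_symm_apply
    set z₀ := x₀ + v with hz₀
    obtain ⟨M, hM⟩ := (isCompact_closedBall z₀ 2).exists_bound_of_continuousOn
      hcont.continuousOn
    have hM0 : 0 ≤ M :=
      le_trans (norm_nonneg _) (hM z₀ (Metric.mem_closedBall_self (by norm_num)))
    have hTbound : ∀ x ∈ Metric.ball z₀ 1, ∀ g' : EuclideanSpace ℝ (Fin n),
        (∀ z, u x + ⟪g', z - x⟫_ℝ ≤ u z) → ‖g'‖ ≤ 2 * M := by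
      intro x hx g' hg'
      rcases eq_or_ne g' 0 with rfl | hg0
      · simpa using by linarith
      have hxc : ‖x - z₀‖ < 1 := by rwa [Metric.mem_ball, dist_eq_norm] at hx
      set z := x + ‖g'‖⁻¹ • g' with hzdef
      have hzx : z - x = ‖g'‖⁻¹ • g' := by rw [hzdef]; abel
      have hinner : ⟪g', z - x⟫_ℝ = ‖g'‖ := by
        rw [hzx, real_inner_smul_right, real_inner_self_eq_norm_sq]
        field_simp
      have hzball : z ∈ Metric.closedBall z₀ 2 := by
        rw [Metric.mem_closedBall, dist_eq_norm]
        have : z - z₀ = (x - z₀) + ‖g'‖⁻¹ • g' := by rw [hzdef]; abel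
        rw [this]
        have h1 : ‖‖g'‖⁻¹ • g'‖ = 1 := by
          rw [norm_smul, norm_inv, norm_norm, inv_mul_cancel₀ (norm_ne_zero_iff.mpr hg0)]
        calc ‖(x - z₀) + ‖g'‖⁻¹ • g'‖ ≤ ‖x - z₀‖ + ‖‖g'‖⁻¹ • g'‖ := norm_add_le _ _
          _ ≤ 1 + 1 := by rw [h1]; linarith
          _ = 2 := by norm_num
      have hxball : x ∈ Metric.closedBall z₀ 2 :=
        Metric.closedBall_subset_closedBall (by norm_num) (Metric.ball_subset_closedBall hx)
      have h2 := hg' z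
      rw [hinner] at h2
      have h3 := hM z hzball
      have h4 := hM x hxball
      rw [Real.norm_eq_abs] at h3 h4
      have := abs_le.mp h3
      have := abs_le.mp h4
      linarith [(abs_le.mp h3).1, (abs_le.mp h3).2, (abs_le.mp h4).1, (abs_le.mp h4).2]
    set δ := f p - cc with hδdef
    have hδ0 : 0 < δ := by rw [hδdef]; linarith
    set r := min 1 (δ / (2 * M + ‖p‖ + 1)) with hrdef
    have hr0 : 0 < r := lt_min one_pos (by positivity)
    have hr1 : r ≤ 1 := min_le_left _ _
    have hr2 : r ≤ δ / (2 * M + ‖p‖ + 1) := min_le_right _ _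
    have hBS : ¬ (Metric.ball z₀ r ⊆ Sᶜ) := fun hsub =>
      absurd (measure_mono_null hsub hSc) (Metric.measure_ball_pos volume z₀ hr0).ne'
    obtain ⟨x, hxB, hxSc⟩ := not_subset.mp hBS
    have hxS : x ∈ S := not_not.mp hxSc
    set g := T x with hgdef
    have hgY : g ∈ Y := hxS.2
    have hgsub : ∀ z, u x + ⟪g, z - x⟫_ℝ ≤ u z :=
      fun z => grad_subgrad hu (hSgrad x hxS) z
    have hgb : ‖g‖ ≤ 2 * M := by
      refine hTbound x ?_ g hgsub
      exact Metric.ball_subset_ball hr1 hxB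
    -- monotonicity
    have hmono : 0 ≤ ⟪g - p, x - x₀⟫_ℝ := by
      have e1 := hgsub x₀
      have e2 := hpx₀ x
      have e3 : ⟪g, x₀ - x⟫_ℝ = -⟪g, x - x₀⟫_ℝ := by
        rw [show x₀ - x = -(x - x₀) from (neg_sub _ _).symm, inner_neg_right]
      have e4 : ⟪g - p, x - x₀⟫_ℝ = ⟪g, x - x₀⟫_ℝ - ⟪p, x - x₀⟫_ℝ := by
        rw [inner_sub_left]
      rw [e3] at e1
      rw [e4]
      linarith
    -- estimates
    have hdecomp : x - x₀ = v + (x - z₀) := by rw [hz₀]; abel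
    have hA : ⟪g - p, v⟫_ℝ < -δ := by
      have h1 : ⟪g - p, v⟫_ℝ = ⟪v, g⟫_ℝ - ⟪v, p⟫_ℝ := by
        rw [inner_sub_left, real_inner_comm g v, real_inner_comm p v]
      have h2 : f g < cc := hfY g (subset_closure hgY)
      rw [h1, hfv g, hfv p, hδdef]
      linarith
    have hB : ⟪g - p, x - z₀⟫_ℝ < δ := by
      have h1 : ⟪g - p, x - z₀⟫_ℝ ≤ ‖g - p‖ * ‖x - z₀‖ := real_inner_le_norm _ _
      have h2 : ‖g - p‖ ≤ 2 * M + ‖p‖ := le_trans (norm_sub_le _ _) (by linarith)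
      have h3 : ‖x - z₀‖ < r := by rwa [Metric.mem_ball, dist_eq_norm] at hxB
      have h4 : ‖g - p‖ * ‖x - z₀‖ ≤ (2 * M + ‖p‖) * r := by
        apply mul_le_mul h2 h3.le (norm_nonneg _) (by positivity)
      have h5 : (2 * M + ‖p‖) * r < δ := by
        have h6 : (2 * M + ‖p‖) * r ≤ (2 * M + ‖p‖) * (δ / (2 * M + ‖p‖ + 1)) :=
          mul_le_mul_of_nonneg_left hr2 (by positivity)
        have h7 : (2 * M + ‖p‖) * (δ / (2 * M + ‖p‖ + 1)) < δ := by
          have ha : (0:ℝ) ≤ 2 * M + ‖p‖ := by positivity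
          rw [show (2 * M + ‖p‖) * (δ / (2 * M + ‖p‖ + 1))
              = ((2 * M + ‖p‖) / (2 * M + ‖p‖ + 1)) * δ by ring]
          have h8 : (2 * M + ‖p‖) / (2 * M + ‖p‖ + 1) < 1 :=
            (div_lt_one (by positivity)).mpr (by linarith)
          have h9 := mul_lt_mul_of_pos_right h8 hδ0
          linarith
        linarith
      linarith
    have hsum : ⟪g - p, x - x₀⟫_ℝ = ⟪g - p, v⟫_ℝ + ⟪g - p, x - z₀⟫_ℝ := by
      rw [hdecomp, inner_add_right]
    rw [hsum] at hmono
    linarith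
  · rw [diff_eq_empty.mpr hY_sub]
    exact measure_empty
end

section
/- Let n ≥ 2, c > 0 and λ > 1, and set p := (n − 1 + λ)/(λ − 1). Then there exists a constant C > 0 such that for every θ ∈ (0, 1], the set X_θ := {(x₁, x') ∈ ℝ × ℝ^{n−1} : −θ|x'| ≤ x₁ ≤ −c|x'|^λ} has Lebesgue measure at most C θ^p. In particular, if λ < 2(n−1)/(n−2) (no condition when n = 2) then p > n − 1, so vol(X_θ) = o(θ^{n−1}) as θ → 0. -/
open MeasureTheory Set
open scoped ENNReal

/-- **The measure estimate of Remark 5 (rmk:bdry).** For `n ≥ 2`, `c > 0`, `λ > 1` and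
`p = (n − 1 + λ)/(λ − 1)`, there is a constant `C > 0` such that for every `θ ∈ (0, 1]`
the set `X_θ = {(x₁, x') : −θ|x'| ≤ x₁ ≤ −c|x'|^λ}` has Lebesgue measure at most `C θ^p`;
moreover if `λ < 2(n−1)/(n−2)` (no condition when `n = 2`) then `p > n − 1`. -/
theorem measure_estimate_boundary_cusp
    (n : ℕ) (hn : 2 ≤ n) (c lam : ℝ) (hc : 0 < c) (hlam : 1 < lam)
    (p : ℝ) (hp : p = ((n : ℝ) - 1 + lam) / (lam - 1)) :
    (∃ C : ℝ, 0 < C ∧ ∀ θ : ℝ, θ ∈ Set.Ioc (0 : ℝ) 1 →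
      volume {x : ℝ × EuclideanSpace ℝ (Fin (n - 1)) |
          -θ * ‖x.2‖ ≤ x.1 ∧ x.1 ≤ -c * ‖x.2‖ ^ lam}
        ≤ ENNReal.ofReal (C * θ ^ p)) ∧
    ((n = 2 ∨ lam < 2 * ((n : ℝ) - 1) / ((n : ℝ) - 2)) → (n : ℝ) - 1 < p) := by
  have hl1 : (0:ℝ) < lam - 1 := by linarith
  constructor
  · set E := EuclideanSpace ℝ (Fin (n - 1))
    set ω : ℝ≥0∞ := volume (Metric.closedBall (0:E) 1) with hω
    have hωpos : 0 < ω := Metric.measure_closedBall_pos _ _ one_pos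
    have hωlt : ω < ⊤ := measure_closedBall_lt_top
    refine ⟨ω.toReal * c ^ (-(n:ℝ)/(lam-1)), ?_, ?_⟩
    · exact mul_pos (ENNReal.toReal_pos hωpos.ne' hωlt.ne) (Real.rpow_pos_of_pos hc _)
    intro θ hθ
    obtain ⟨hθ0, hθ1⟩ := hθ
    set R : ℝ := (θ/c) ^ ((lam-1)⁻¹) with hR
    have hRpos : 0 < R := Real.rpow_pos_of_pos (div_pos hθ0 hc) _
    have hsub : {x : ℝ × E | -θ * ‖x.2‖ ≤ x.1 ∧ x.1 ≤ -c * ‖x.2‖ ^ lam}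
        ⊆ Icc (-(θ*R)) 0 ×ˢ Metric.closedBall (0:E) R := by
      rintro ⟨x1, x2⟩ ⟨h1, h2⟩
      have hn2 : (0:ℝ) ≤ ‖x2‖ := norm_nonneg _
      have hx2R : ‖x2‖ ≤ R := by
        rcases eq_or_lt_of_le hn2 with h0 | h0
        · rw [← h0]; exact hRpos.le
        · have hcl : c * ‖x2‖ ^ lam ≤ θ * ‖x2‖ := by nlinarith [h1.trans h2]
          have key : ‖x2‖ ^ (lam - 1) ≤ θ / c := by
            rw [le_div_iff₀ hc]
            have : ‖x2‖ ^ (lam - 1) * ‖x2‖ = ‖x2‖ ^ lam := by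
              rw [Real.rpow_sub h0, Real.rpow_one]; field_simp
            nlinarith [Real.rpow_pos_of_pos h0 (lam - 1)]
          calc ‖x2‖ = (‖x2‖ ^ (lam-1)) ^ ((lam-1)⁻¹) := by
                rw [← Real.rpow_mul hn2, mul_inv_cancel₀ hl1.ne', Real.rpow_one]
            _ ≤ R := Real.rpow_le_rpow (Real.rpow_nonneg hn2 _) key (by positivity)
      constructor
      · constructor
        · calc -(θ*R) ≤ -θ * ‖x2‖ := by nlinarith
            _ ≤ x1 := h1
        · exact h2.trans (by nlinarith [Real.rpow_nonneg hn2 lam])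
      · simpa [Metric.mem_closedBall, dist_zero_right] using hx2R
    calc volume {x : ℝ × E | -θ * ‖x.2‖ ≤ x.1 ∧ x.1 ≤ -c * ‖x.2‖ ^ lam}
        ≤ volume (Icc (-(θ*R)) 0 ×ˢ Metric.closedBall (0:E) R) := measure_mono hsub
      _ = volume (Icc (-(θ*R)) 0) * volume (Metric.closedBall (0:E) R) := by
          rw [Measure.volume_eq_prod, Measure.prod_prod]
      _ = ENNReal.ofReal (θ*R) * (ENNReal.ofReal (R ^ (Module.finrank ℝ E)) * ω) := by
          rw [Real.volume_Icc, Measure.addHaar_closedBall' _ _ hRpos.le]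
          ring_nf
          rfl
      _ ≤ ENNReal.ofReal (ω.toReal * c ^ (-(n:ℝ)/(lam-1)) * θ ^ p) := by
          conv_lhs => rw [← ENNReal.ofReal_toReal hωlt.ne]
          rw [← ENNReal.ofReal_mul (by positivity), ← ENNReal.ofReal_mul (by positivity)]
          apply ENNReal.ofReal_le_ofReal
          apply le_of_eq
          have hfr : Module.finrank ℝ E = n - 1 := finrank_euclideanSpace_fin
          have hbase := div_pos hθ0 hc
          have hRn : R ^ (Module.finrank ℝ E) * R = (θ/c) ^ ((n:ℝ)/(lam-1)) := by
            rw [hfr, ← Real.rpow_natCast R (n-1), hR,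
              ← Real.rpow_mul hbase.le, ← Real.rpow_add hbase]
            congr 1
            have hcast : ((n-1 : ℕ) : ℝ) = (n:ℝ) - 1 := by
              push_cast [Nat.cast_sub (by omega : 1 ≤ n)]; ring
            rw [hcast]; field_simp; ring
          have hsplit : (θ/c) ^ ((n:ℝ)/(lam-1)) = θ ^ ((n:ℝ)/(lam-1)) * c ^ (-(n:ℝ)/(lam-1)) := by
            rw [Real.div_rpow hθ0.le hc.le, neg_div, Real.rpow_neg hc.le, div_eq_mul_inv]
          have hθp : θ * θ ^ ((n:ℝ)/(lam-1)) = θ ^ p := by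
            rw [hp, show ((n:ℝ)-1+lam)/(lam-1) = 1 + (n:ℝ)/(lam-1) by
              field_simp; ring]
            rw [Real.rpow_add hθ0, Real.rpow_one]
          calc θ * R * (R ^ (Module.finrank ℝ E) * ω.toReal)
              = θ * (R ^ (Module.finrank ℝ E) * R) * ω.toReal := by ring
            _ = ω.toReal * c ^ (-(n:ℝ)/(lam-1)) * θ ^ p := by
                rw [hRn, hsplit, ← hθp]; ring
  · intro h
    have key : ((n:ℝ) - 2) * lam < 2 * ((n:ℝ) - 1) := by
      rcases h with h2 | h2
      · subst h2; norm_num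
      · rcases eq_or_lt_of_le hn with h3 | h3
        · have hc2 : (n:ℝ) = 2 := by exact_mod_cast h3.symm
          rw [hc2] at h2 ⊢; norm_num
        · have hn2 : (0:ℝ) < (n:ℝ) - 2 := by
            have : (3:ℕ) ≤ n := h3
            have : (3:ℝ) ≤ (n:ℝ) := by exact_mod_cast this
            linarith
          calc ((n:ℝ)-2) * lam < ((n:ℝ)-2) * (2*((n:ℝ)-1)/((n:ℝ)-2)) := by
                exact (mul_lt_mul_iff_right₀ hn2).2 h2
            _ = 2 * ((n:ℝ)-1) := by field_simp
    rw [hp, lt_div_iff₀ hl1]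
    nlinarith
end

section
/- Let n ≥ 2 and let Y ⊆ ℝⁿ be a convex set with nonempty interior such that both the origin 0 and the first standard basis vector e₁ belong to the closure of Y. Then there exist c > 0 and θ₀ ∈ (0, 1) such that for every θ ∈ (0, θ₀), the set Y_θ := {y = (y₁, y') ∈ Y : y₁ > 0 and |y'| ≤ θ y₁} satisfies vol(Y_θ ∩ B₂) ≥ c θ^{n−1}, where B₂ is the open ball of radius 2 centered at the origin. -/
open MeasureTheory Set
open scoped ENNReal

/-- **The cone-volume lower bound of Step 4, case (2-c), of the proof of Theorem 1.**
Let `n ≥ 2` and let `Y ⊆ ℝⁿ = ℝ × ℝ^{n−1}` be a convex set with nonempty interior whose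
closure contains both the origin and the first basis vector `e₁ = (1, 0)`. Then there are
`c > 0` and `θ₀ ∈ (0, 1)` such that for all `θ ∈ (0, θ₀)`, the cone-like set
`Y_θ = {y ∈ Y : y₁ > 0, |y'| ≤ θ y₁}` satisfies `vol(Y_θ ∩ B₂) ≥ c θ^{n−1}`,
where `B₂` is the Euclidean ball of radius `2` about the origin. -/
theorem cone_volume_lower_bound
    (n : ℕ) (hn : 2 ≤ n)
    (Y : Set (ℝ × EuclideanSpace ℝ (Fin (n - 1))))
    (hYconv : Convex ℝ Y) (hYint : (interior Y).Nonempty)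
    (h0 : (0 : ℝ × EuclideanSpace ℝ (Fin (n - 1))) ∈ closure Y)
    (he1 : ((1 : ℝ), (0 : EuclideanSpace ℝ (Fin (n - 1)))) ∈ closure Y) :
    ∃ c : ℝ, 0 < c ∧ ∃ θ₀ : ℝ, θ₀ ∈ Set.Ioo (0 : ℝ) 1 ∧
      ∀ θ : ℝ, θ ∈ Set.Ioo 0 θ₀ →
        ENNReal.ofReal (c * θ ^ (n - 1)) ≤
          volume ({y ∈ Y | 0 < y.1 ∧ ‖y.2‖ ≤ θ * y.1} ∩
            {y : ℝ × EuclideanSpace ℝ (Fin (n - 1)) | y.1 ^ 2 + ‖y.2‖ ^ 2 < 4}) := by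
  haveI : Nonempty (Fin (n - 1)) := ⟨⟨0, by omega⟩⟩
  obtain ⟨p, hp⟩ := hYint
  obtain ⟨r, hr, hball⟩ := Metric.isOpen_iff.1 isOpen_interior p hp
  obtain ⟨R, hRdef⟩ : ∃ x : ℝ, x = ‖p‖ + r + 1 := ⟨_, rfl⟩
  have hnp : (0:ℝ) ≤ ‖p‖ := norm_nonneg p
  have hR1 : (1:ℝ) ≤ R := by simp only [hRdef]; linarith
  have hRpos : (0:ℝ) < R := by linarith
  have hp1R : |p.1| ≤ R := by
    have h1 : ‖p.1‖ ≤ ‖p‖ := norm_fst_le p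
    have : |p.1| = ‖p.1‖ := rfl
    rw [this]; linarith
  have hp2R : ‖p.2‖ ≤ R := by
    have h1 : ‖p.2‖ ≤ ‖p‖ := norm_snd_le p
    linarith
  have hvlt : volume (Metric.ball (0 : EuclideanSpace ℝ (Fin (n - 1))) 1) < ⊤ := measure_ball_lt_top
  obtain ⟨v, hvdef⟩ : ∃ x : ℝ, x = (volume (Metric.ball (0 : EuclideanSpace ℝ (Fin (n - 1))) 1)).toReal := ⟨_, rfl⟩
  have hvpos : 0 < v :=
    hvdef ▸ ENNReal.toReal_pos (Metric.measure_ball_pos volume 0 one_pos).ne' hvlt.ne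
  -- the two closure points on the axis
  have ha : (((1:ℝ)/4, (0 : EuclideanSpace ℝ (Fin (n - 1)))) : ℝ × EuclideanSpace ℝ (Fin (n - 1))) ∈ closure Y := by
    have h := hYconv.closure he1 h0 (a := 1/4) (b := 3/4) (by norm_num) (by norm_num)
      (by norm_num)
    simpa using h
  have hb : (((3:ℝ)/4, (0 : EuclideanSpace ℝ (Fin (n - 1)))) : ℝ × EuclideanSpace ℝ (Fin (n - 1))) ∈ closure Y := by
    have h := hYconv.closure he1 h0 (a := 3/4) (b := 1/4) (by norm_num) (by norm_num)
      (by norm_num)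
    simpa using h
  refine ⟨(1/4) * (r / (8*R))^(n-1) * v, by positivity, 1/2, ⟨by norm_num, by norm_num⟩, ?_⟩
  rintro θ ⟨hθ0, hθ1⟩
  obtain ⟨lam, hlamdef⟩ : ∃ x : ℝ, x = θ / (8 * R) := ⟨_, rfl⟩
  have hlam0 : 0 < lam := by rw [hlamdef]; positivity
  have hlamR : lam * R = θ / 8 := by
    rw [hlamdef]; field_simp
  have hlamR16 : lam * R ≤ 1/16 := by rw [hlamR]; linarith
  have hlamle : lam ≤ 1/16 := by
    have := mul_le_mul_of_nonneg_left hR1 hlam0.le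
    linarith
  obtain ⟨a₁, ha₁⟩ : ∃ x : ℝ, x = (1 - lam)/4 + lam * p.1 := ⟨_, rfl⟩
  obtain ⟨b₁, hb₁⟩ : ∃ x : ℝ, x = 3*(1 - lam)/4 + lam * p.1 := ⟨_, rfl⟩
  have hba : b₁ - a₁ = (1 - lam)/2 := by rw [ha₁, hb₁]; ring
  have hbapos : 0 < b₁ - a₁ := by rw [hba]; linarith
  have habs := abs_le.1 hp1R
  -- the cylinder
  set S : Set (ℝ × EuclideanSpace ℝ (Fin (n - 1))) := Icc a₁ b₁ ×ˢ Metric.ball (lam • p.2) (lam * r) with hS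
  have key : S ⊆ ({y ∈ Y | 0 < y.1 ∧ ‖y.2‖ ≤ θ * y.1} ∩
      {y : ℝ × EuclideanSpace ℝ (Fin (n - 1)) | y.1 ^ 2 + ‖y.2‖ ^ 2 < 4}) := by
    rintro ⟨y₁, y'⟩ ⟨hy1, hy2⟩
    simp only [mem_Icc] at hy1
    rw [Metric.mem_ball] at hy2
    -- bounds on y'
    have hy'b : ‖y'‖ ≤ θ / 8 := by
      have h1 : ‖y' - lam • p.2‖ < lam * r := by
        rw [← dist_eq_norm]; exact hy2
      have h2 : ‖lam • p.2‖ = lam * ‖p.2‖ := by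
        rw [norm_smul, Real.norm_eq_abs, abs_of_pos hlam0]
      have h3 : ‖y'‖ ≤ ‖y' - lam • p.2‖ + ‖lam • p.2‖ := by
        simpa using norm_add_le (y' - lam • p.2) (lam • p.2)
      have h4 : lam * r + lam * ‖p.2‖ ≤ lam * R := by
        have := mul_le_mul_of_nonneg_left (norm_snd_le p) hlam0.le
        rw [hRdef]; linarith
      linarith
    have hy₁lb : (1:ℝ)/8 ≤ y₁ := by
      have : a₁ ≤ y₁ := hy1.1
      have h5 : lam * p.1 ≥ -(lam * R) := by
        have := mul_le_mul_of_nonneg_left habs.1 hlam0.le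
        linarith
      rw [ha₁] at this; linarith
    have hy₁ub : y₁ ≤ 7/8 := by
      have : y₁ ≤ b₁ := hy1.2
      have h5 : lam * p.1 ≤ lam * R := mul_le_mul_of_nonneg_left habs.2 hlam0.le
      rw [hb₁] at this; linarith
    -- membership in Y
    have hmemY : ((y₁, y') : ℝ × EuclideanSpace ℝ (Fin (n - 1))) ∈ Y := by
      have hq : ((p.1, lam⁻¹ • y') : ℝ × EuclideanSpace ℝ (Fin (n - 1))) ∈ interior Y := by
        apply hball
        rw [Metric.mem_ball, Prod.dist_eq]
        have d1 : dist (p.1) p.1 = 0 := dist_self _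
        have d2 : dist (lam⁻¹ • y') p.2 < r := by
          have : lam⁻¹ • y' - p.2 = lam⁻¹ • (y' - lam • p.2) := by
            rw [smul_sub, inv_smul_smul₀ hlam0.ne']
          rw [dist_eq_norm, this, norm_smul, Real.norm_eq_abs,
            abs_of_pos (inv_pos.2 hlam0)]
          have h1 : ‖y' - lam • p.2‖ < lam * r := by
            rw [← dist_eq_norm]; exact hy2
          calc lam⁻¹ * ‖y' - lam • p.2‖ < lam⁻¹ * (lam * r) := by
                exact mul_lt_mul_of_pos_left h1 (inv_pos.2 hlam0)
            _ = r := by field_simp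
        simp only [d1]
        exact max_lt (by simpa using hr) d2
      have hA : ((a₁, y') : ℝ × EuclideanSpace ℝ (Fin (n - 1))) ∈ interior Y := by
        have h := hYconv.combo_interior_closure_mem_interior hq ha
          (a := lam) (b := 1 - lam) hlam0 (by linarith) (by ring)
        convert h using 1
        rw [Prod.ext_iff]
        constructor
        · show a₁ = lam * p.1 + (1 - lam) * (1/4)
          rw [ha₁]; ring
        · show y' = lam • (lam⁻¹ • y') + (1 - lam) • (0 : EuclideanSpace ℝ (Fin (n - 1)))
          rw [smul_inv_smul₀ hlam0.ne', smul_zero, add_zero]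
      have hB : ((b₁, y') : ℝ × EuclideanSpace ℝ (Fin (n - 1))) ∈ interior Y := by
        have h := hYconv.combo_interior_closure_mem_interior hq hb
          (a := lam) (b := 1 - lam) hlam0 (by linarith) (by ring)
        convert h using 1
        rw [Prod.ext_iff]
        constructor
        · show b₁ = lam * p.1 + (1 - lam) * (3/4)
          rw [hb₁]; ring
        · show y' = lam • (lam⁻¹ • y') + (1 - lam) • (0 : EuclideanSpace ℝ (Fin (n - 1)))
          rw [smul_inv_smul₀ hlam0.ne', smul_zero, add_zero]
      set s : ℝ := (y₁ - a₁) / (b₁ - a₁) with hs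
      have hs0 : 0 ≤ s := div_nonneg (by linarith [hy1.1]) hbapos.le
      have hs1 : s ≤ 1 := by
        rw [hs, div_le_one hbapos]; linarith [hy1.2]
      have h := (hYconv.interior) hA hB (a := 1 - s) (b := s) (by linarith) hs0 (by ring)
      apply interior_subset
      convert h using 1
      rw [Prod.ext_iff]
      constructor
      · show y₁ = (1 - s) * a₁ + s * b₁
        rw [hs]; field_simp; ring
      · show y' = (1 - s) • y' + s • y'
        rw [← add_smul]; simp
    refine ⟨⟨hmemY, by linarith, ?_⟩, ?_⟩
    · show ‖y'‖ ≤ θ * y₁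
      have := mul_le_mul_of_nonneg_left hy₁lb hθ0.le
      linarith
    · show y₁ ^ 2 + ‖y'‖ ^ 2 < 4
      have h1 : ‖y'‖ ≤ 1 := by linarith
      have h2 : (0:ℝ) ≤ ‖y'‖ := norm_nonneg _
      have e1 : y₁ ^ 2 ≤ (7/8:ℝ) ^ 2 := pow_le_pow_left₀ (by linarith) hy₁ub 2
      have e2 : ‖y'‖ ^ 2 ≤ (1:ℝ) ^ 2 := pow_le_pow_left₀ h2 h1 2
      linarith [e1, e2]
  -- volume computation
  have hvol : volume S = ENNReal.ofReal ((1 - lam)/2) *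
      (ENNReal.ofReal ((lam * r) ^ (n - 1)) * volume (Metric.ball (0 : EuclideanSpace ℝ (Fin (n - 1))) 1)) := by
    rw [hS, Measure.volume_eq_prod, Measure.prod_prod, Real.volume_Icc, hba,
      Measure.addHaar_ball volume (lam • p.2) (by positivity : (0:ℝ) ≤ lam * r),
      finrank_euclideanSpace_fin]
  have hlr : (0:ℝ) ≤ lam * r := mul_nonneg hlam0.le hr.le
  have hlrpow : (0:ℝ) ≤ (lam * r) ^ (n - 1) := pow_nonneg hlr _
  have h12 : (0:ℝ) ≤ (1 - lam)/2 := by linarith only [hlamle]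
  have hofv : volume (Metric.ball (0 : EuclideanSpace ℝ (Fin (n - 1))) 1)
      = ENNReal.ofReal v := by rw [hvdef, ENNReal.ofReal_toReal hvlt.ne]
  have hvol2 : volume S = ENNReal.ofReal (((1 - lam)/2) * ((lam * r) ^ (n - 1) * v)) := by
    rw [hvol, hofv, ← ENNReal.ofReal_mul hlrpow, ← ENNReal.ofReal_mul h12]
  have hreal : (1/4) * (r / (8*R))^(n-1) * v * θ ^ (n-1)
      ≤ ((1 - lam)/2) * ((lam * r) ^ (n - 1) * v) := by
    have hpow : (r / (8*R))^(n-1) * θ ^ (n-1) = (lam * r) ^ (n-1) := by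
      rw [← mul_pow]
      congr 1
      rw [hlamdef]; ring
    have h1 : (1/4 : ℝ) ≤ (1 - lam)/2 := by linarith only [hlamle]
    have h2 : (0:ℝ) ≤ (lam * r) ^ (n-1) * v := mul_nonneg hlrpow hvpos.le
    calc (1/4) * (r / (8*R))^(n-1) * v * θ ^ (n-1)
        = (1/4) * ((lam * r) ^ (n-1) * v) := by rw [← hpow]; ring
      _ ≤ ((1 - lam)/2) * ((lam * r) ^ (n-1) * v) :=
          mul_le_mul_of_nonneg_right h1 h2
  calc ENNReal.ofReal ((1/4) * (r / (8*R))^(n-1) * v * θ ^ (n-1))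
      ≤ volume S := by
        rw [hvol2]; exact ENNReal.ofReal_le_ofReal hreal
    _ ≤ volume ({y ∈ Y | 0 < y.1 ∧ ‖y.2‖ ≤ θ * y.1} ∩
          {y : ℝ × EuclideanSpace ℝ (Fin (n - 1)) | y.1 ^ 2 + ‖y.2‖ ^ 2 < 4}) := measure_mono key
end

section
/- Let n ≥ 1 and let Y ⊆ ℝⁿ be a nonempty open convex set. Let F : ℝⁿ → ℝ be a Borel function with F > 0 a.e. on ℝⁿ and ∫_{ℝⁿ} F dx = 1, and let G : ℝⁿ → ℝ be a nonnegative Borel function with G > 0 a.e. on Y and ∫_Y G dy = 1. Let u : ℝⁿ → ℝ be a convex function whose a.e.-defined gradient ∇u pushes the measure μ := F dx forward to 1_Y G dy. Then for every Borel set A ⊆ ℝⁿ, the symmetric difference of A and the set (∇u)^{-1}( ∂u(A) ∩ Y ) is μ-negligible, i.e. ∫ over this symmetric difference of F dx equals 0. -/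
open MeasureTheory Set
open scoped InnerProductSpace ENNReal symmDiff

open scoped NNReal

variable {n : ℕ}

lemma inner_le_of_subgradient {f : EuclideanSpace ℝ (Fin n) → ℝ}
    {p x : EuclideanSpace ℝ (Fin n)} {L : EuclideanSpace ℝ (Fin n) →L[ℝ] ℝ}
    (hf : HasFDerivAt f L p) (hx : ∀ q, f p + ⟪x, q - p⟫_ℝ ≤ f q)
    (v : EuclideanSpace ℝ (Fin n)) : ⟪x, v⟫_ℝ ≤ L v := by
  have hcurve : HasDerivAt (fun t : ℝ => p + t • v) v 0 := by
    simpa using ((hasDerivAt_id (0 : ℝ)).smul_const v).const_add p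
  have hf' : HasFDerivAt f L (p + (0 : ℝ) • v) := by simpa using hf
  have hg : HasDerivAt (fun t : ℝ => f (p + t • v)) (L v) 0 := by
    have := hf'.comp_hasDerivAt (x := (0 : ℝ)) hcurve
    exact this
  have hslope := hasDerivAt_iff_tendsto_slope.mp hg
  have hslope' : Filter.Tendsto (slope (fun t : ℝ => f (p + t • v)) 0) (nhdsWithin 0 (Set.Ioi 0))
      (nhds (L v)) := hslope.mono_left (nhdsWithin_mono _ (fun t ht => ne_of_gt ht))
  refine ge_of_tendsto hslope' ?_
  filter_upwards [self_mem_nhdsWithin] with t ht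
  have ht0 : (0 : ℝ) < t := ht
  have key : f p + t * ⟪x, v⟫_ℝ ≤ f (p + t • v) := by
    have h1 := hx (p + t • v)
    have h2 : ⟪x, (p + t • v) - p⟫_ℝ = t * ⟪x, v⟫_ℝ := by
      rw [add_sub_cancel_left, real_inner_smul_right]
    rwa [h2] at h1
  have h3 : slope (fun t : ℝ => f (p + t • v)) 0 t
      = (f (p + t • v) - f (p + (0:ℝ) • v)) / t := by
    rw [slope_def_field]; ring_nf
  rw [h3]
  rw [le_div_iff₀ ht0]
  have : f (p + (0:ℝ) • v) = f p := by norm_num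
  rw [this]
  linarith [key]

lemma gradient_mem_subdifferential {u : EuclideanSpace ℝ (Fin n) → ℝ}
    (hu : ConvexOn ℝ Set.univ u) {x p : EuclideanSpace ℝ (Fin n)}
    (h : HasGradientAt u p x) : ∀ z, u x + ⟪p, z - x⟫_ℝ ≤ u z := by
  intro z
  have hcurve : HasDerivAt (fun t : ℝ => x + t • (z - x)) (z - x) 0 := by
    simpa using ((hasDerivAt_id (0 : ℝ)).smul_const (z - x)).const_add x
  have hf' : HasFDerivAt u ((InnerProductSpace.toDual ℝ _) p) (x + (0 : ℝ) • (z - x)) := by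
    simpa using h.hasFDerivAt
  have hg : HasDerivAt (fun t : ℝ => u (x + t • (z - x))) ⟪p, z - x⟫_ℝ 0 := by
    have := hf'.comp_hasDerivAt (x := (0 : ℝ)) hcurve
    exact this
  have hslope := hasDerivAt_iff_tendsto_slope.mp hg
  have hslope' : Filter.Tendsto (slope (fun t : ℝ => u (x + t • (z - x))) 0)
      (nhdsWithin 0 (Set.Ioo (0:ℝ) 1)) (nhds ⟪p, z - x⟫_ℝ) :=
    hslope.mono_left (nhdsWithin_mono _ (fun t ht => ne_of_gt ht.1))
  haveI : (nhdsWithin (0:ℝ) (Set.Ioo (0:ℝ) 1)).NeBot := by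
    apply IsGLB.nhdsWithin_neBot (isGLB_Ioo one_pos) (Set.nonempty_Ioo.mpr one_pos)
  have hle : ⟪p, z - x⟫_ℝ ≤ u z - u x := by
    refine le_of_tendsto hslope' ?_
    filter_upwards [self_mem_nhdsWithin] with t ht
    obtain ⟨ht0, ht1⟩ := ht
    have hconv := hu.2 (Set.mem_univ x) (Set.mem_univ z)
      (by linarith : (0:ℝ) ≤ 1 - t) (le_of_lt ht0) (by ring)
    have heq : (1 - t) • x + t • z = x + t • (z - x) := by
      module
    rw [heq] at hconv
    have h3 : slope (fun t : ℝ => u (x + t • (z - x))) 0 t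
        = (u (x + t • (z - x)) - u (x + (0:ℝ) • (z - x))) / t := by
      rw [slope_def_field]; ring_nf
    rw [h3, div_le_iff₀ ht0]
    have h0 : u (x + (0:ℝ) • (z - x)) = u x := by norm_num
    rw [h0]
    simp only [smul_eq_mul] at hconv
    nlinarith [hconv]
  linarith

/-- Truncated Legendre transform. -/
noncomputable def legR (u : EuclideanSpace ℝ (Fin n) → ℝ) (R : ℝ)
    (p : EuclideanSpace ℝ (Fin n)) : ℝ :=
  sSup ((fun x => ⟪p, x⟫_ℝ - u x) '' Metric.closedBall 0 R)

lemma legR_bddAbove {u : EuclideanSpace ℝ (Fin n) → ℝ} (hc : Continuous u) (R : ℝ)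
    (p : EuclideanSpace ℝ (Fin n)) :
    BddAbove ((fun x => ⟪p, x⟫_ℝ - u x) '' Metric.closedBall 0 R) :=
  ((isCompact_closedBall 0 R).bddAbove_image
    (((continuous_inner.comp (Continuous.prodMk_right p)).sub hc).continuousOn))

lemma le_legR {u : EuclideanSpace ℝ (Fin n) → ℝ} (hc : Continuous u) {R : ℝ}
    {p x : EuclideanSpace ℝ (Fin n)} (hx : ‖x‖ ≤ R) :
    ⟪p, x⟫_ℝ - u x ≤ legR u R p :=
  le_csSup (legR_bddAbove hc R p) ⟨x, by simpa [Metric.mem_closedBall] using hx, rfl⟩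

lemma legR_subgradient {u : EuclideanSpace ℝ (Fin n) → ℝ} (hc : Continuous u) {R : ℝ}
    {p x : EuclideanSpace ℝ (Fin n)} (hx : ∀ z, u x + ⟪p, z - x⟫_ℝ ≤ u z) (hxR : ‖x‖ ≤ R) :
    ∀ q, legR u R q ≥ legR u R p + ⟪x, q - p⟫_ℝ := by
  have hval : legR u R p = ⟪p, x⟫_ℝ - u x := by
    refine le_antisymm ?_ (le_legR hc hxR)
    refine csSup_le (by exact ⟨_, ⟨x, by simpa using hxR, rfl⟩⟩) ?_
    rintro r ⟨w, _, rfl⟩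
    have := hx w
    rw [inner_sub_right] at this
    show ⟪p, w⟫_ℝ - u w ≤ ⟪p, x⟫_ℝ - u x
    linarith
  intro q
  have h1 : ⟪q, x⟫_ℝ - u x ≤ legR u R q := le_legR hc hxR
  have h2 : ⟪q, x⟫_ℝ - u x = (⟪p, x⟫_ℝ - u x) + ⟪x, q - p⟫_ℝ := by
    rw [show ⟪x, q - p⟫_ℝ = ⟪q - p, x⟫_ℝ from (real_inner_comm x (q - p)).symm, inner_sub_left]
    ring
  rw [hval]
  linarith [h1, h2.symm.le]

lemma legR_lipschitz {u : EuclideanSpace ℝ (Fin n) → ℝ} (hc : Continuous u) (R : ℝ≥0) :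
    LipschitzWith R (legR u (R : ℝ)) := by
  have key : ∀ p q : EuclideanSpace ℝ (Fin n),
      legR u (R : ℝ) p ≤ legR u (R : ℝ) q + R * dist p q := by
    intro p q
    refine csSup_le (by exact ⟨_, ⟨0, by simp [Metric.mem_closedBall], rfl⟩⟩) ?_
    rintro r ⟨w, hw, rfl⟩
    show ⟪p, w⟫_ℝ - u w ≤ _
    have hw' : ‖w‖ ≤ (R : ℝ) := by simpa [Metric.mem_closedBall] using hw
    have h1 : ⟪q, w⟫_ℝ - u w ≤ legR u (R : ℝ) q := le_legR hc hw'
    have h2 : ⟪p, w⟫_ℝ - ⟪q, w⟫_ℝ ≤ (R : ℝ) * dist p q := by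
      rw [← inner_sub_left]
      calc ⟪p - q, w⟫_ℝ ≤ ‖p - q‖ * ‖w‖ := real_inner_le_norm _ _
        _ ≤ dist p q * (R : ℝ) := by
            rw [dist_eq_norm]
            exact mul_le_mul_of_nonneg_left hw' (norm_nonneg _)
        _ = (R : ℝ) * dist p q := by ring
    linarith
  refine LipschitzWith.of_dist_le_mul fun p q => ?_
  rw [Real.dist_eq, abs_sub_le_iff]
  constructor
  · linarith [key p q]
  · have hq := key q p
    rw [dist_comm q p] at hq
    linarith

/-- The set of points lying in the subdifferential of `u` at two distinct points is null. -/
lemma bad_set_null {u : EuclideanSpace ℝ (Fin n) → ℝ} (hu : ConvexOn ℝ Set.univ u) :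
    ∃ N : Set (EuclideanSpace ℝ (Fin n)), MeasurableSet N ∧ volume N = 0 ∧
      ∀ p x z, (∀ w, u x + ⟪p, w - x⟫_ℝ ≤ u w) → (∀ w, u z + ⟪p, w - z⟫_ℝ ≤ u w) →
        x ≠ z → p ∈ N := by
  have hc : Continuous u := by
    rw [← continuousOn_univ]
    exact hu.continuousOn isOpen_univ
  refine ⟨⋃ R : ℕ, {q | DifferentiableAt ℝ (legR u ((R : ℝ≥0) : ℝ)) q}ᶜ,
    MeasurableSet.iUnion fun R => (measurableSet_of_differentiableAt ℝ _).compl, ?_, ?_⟩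
  · refine measure_iUnion_null fun R => ?_
    exact (legR_lipschitz hc (R : ℝ≥0)).ae_differentiableAt
  · intro p x z hx hz hxz
    obtain ⟨R, hR⟩ := exists_nat_ge (max ‖x‖ ‖z‖)
    refine Set.mem_iUnion.mpr ⟨R, ?_⟩
    intro hdiff
    simp only [Set.mem_setOf_eq] at hdiff
    set L := fderiv ℝ (legR u ((R : ℝ≥0) : ℝ)) p with hL
    have hfd : HasFDerivAt (legR u ((R : ℝ≥0) : ℝ)) L p := hdiff.hasFDerivAt
    have hxR : ‖x‖ ≤ ((R : ℝ≥0) : ℝ) := by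
      simpa using le_trans (le_max_left _ _) hR
    have hzR : ‖z‖ ≤ ((R : ℝ≥0) : ℝ) := by
      simpa using le_trans (le_max_right _ _) hR
    have hsx := legR_subgradient hc hx hxR
    have hsz := legR_subgradient hc hz hzR
    have hkey : ∀ v, ⟪x, v⟫_ℝ = ⟪z, v⟫_ℝ := by
      intro v
      have e1 := inner_le_of_subgradient hfd (fun q => hsx q) v
      have e2 := inner_le_of_subgradient hfd (fun q => hsx q) (-v)
      have e3 := inner_le_of_subgradient hfd (fun q => hsz q) v
      have e4 := inner_le_of_subgradient hfd (fun q => hsz q) (-v)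
      simp only [inner_neg_right, map_neg] at e2 e4
      linarith
    apply hxz
    have : ⟪x - z, x - z⟫_ℝ = 0 := by
      rw [inner_sub_left, hkey (x - z)]; ring
    have := inner_self_eq_zero.mp this
    exact sub_eq_zero.mp this

/-- **Claim (aeinverse) in Step 3 of the proof of Theorem 1, case X = ℝⁿ.** If `Y` is a
nonempty open convex set, `F > 0` a.e. with `∫ F = 1`, `G ≥ 0` with `G > 0` a.e. on `Y`
and `∫_Y G = 1`, and the a.e.-defined gradient `T = ∇u` of the convex function `u` pushes
`μ = F dx` forward to `1_Y G dy`, then for every Borel set `A` the symmetric difference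
`A ∆ (∇u)⁻¹(∂u(A) ∩ Y)` is `μ`-negligible. -/
theorem preimage_of_subdifferential_image_ae_eq
    (n : ℕ) (hn : 1 ≤ n)
    (Y : Set (EuclideanSpace ℝ (Fin n)))
    (hYne : Y.Nonempty) (hYopen : IsOpen Y) (hYconv : Convex ℝ Y)
    (F G : EuclideanSpace ℝ (Fin n) → ℝ)
    (hFmeas : Measurable F) (hGmeas : Measurable G)
    (hFpos : ∀ᵐ x ∂(volume : Measure (EuclideanSpace ℝ (Fin n))), 0 < F x)
    (hGnn : ∀ y, 0 ≤ G y)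
    (hGpos : ∀ᵐ y ∂(volume.restrict Y), 0 < G y)
    (hF1 : ∫ x, F x = 1)
    (hG1 : ∫ y in Y, G y = 1)
    (u : EuclideanSpace ℝ (Fin n) → ℝ)
    (hu : ConvexOn ℝ Set.univ u)
    (T : EuclideanSpace ℝ (Fin n) → EuclideanSpace ℝ (Fin n))
    (hTmeas : Measurable T)
    (hTgrad : ∀ᵐ x ∂(volume : Measure (EuclideanSpace ℝ (Fin n))), HasGradientAt u (T x) x)
    (hpush : Measure.map T (volume.withDensity (fun x => ENNReal.ofReal (F x)))
      = (volume.restrict Y).withDensity (fun y => ENNReal.ofReal (G y))) :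
    ∀ A : Set (EuclideanSpace ℝ (Fin n)), MeasurableSet A →
      (volume.withDensity (fun x => ENNReal.ofReal (F x)))
        (A ∆ (T ⁻¹' ((⋃ x ∈ A, subdifferential u x) ∩ Y))) = 0 := by
  intro A hA
  set μ := volume.withDensity (fun x => ENNReal.ofReal (F x)) with hμdef
  set S := (⋃ x ∈ A, subdifferential u x) ∩ Y with hSdef
  have hY : MeasurableSet Y := hYopen.measurableSet
  have hμac : μ ≪ (volume : Measure (EuclideanSpace ℝ (Fin n))) :=
    withDensity_absolutelyContinuous _ _
  -- the bad set
  obtain ⟨N, hNmeas, hNnull, hNmem⟩ := bad_set_null hu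
  -- three null sets
  have hZ : μ {x | ¬ HasGradientAt u (T x) x} = 0 := by
    have : ∀ᵐ x ∂μ, HasGradientAt u (T x) x := hTgrad.filter_mono hμac.ae_le
    exact ae_iff.mp this
  have hmap : ∀ (s : Set (EuclideanSpace ℝ (Fin n))), MeasurableSet s →
      (volume.restrict Y) s = 0 → μ (T ⁻¹' s) = 0 := by
    intro s hs h0
    have hm : μ (T ⁻¹' s) = Measure.map T μ s := (Measure.map_apply hTmeas hs).symm
    rw [hm, hpush, withDensity_apply _ hs, setLIntegral_measure_zero _ _ h0]
  have hYc : μ (T ⁻¹' Yᶜ) = 0 := by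
    refine hmap _ hY.compl ?_
    rw [Measure.restrict_apply hY.compl]
    simp
  have hNpre : μ (T ⁻¹' N) = 0 := by
    refine hmap _ hNmeas ?_
    exact le_antisymm (le_trans (Measure.restrict_le_self _) hNnull.le) zero_le
  -- inclusion
  have hsub : A ∆ (T ⁻¹' S) ⊆
      {x | ¬ HasGradientAt u (T x) x} ∪ (T ⁻¹' Yᶜ ∪ T ⁻¹' N) := by
    intro x hx
    by_cases hgrad : HasGradientAt u (T x) x
    · right
      have hTsub : ∀ w, u x + ⟪T x, w - x⟫_ℝ ≤ u w :=
        gradient_mem_subdifferential hu hgrad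
      rcases hx with ⟨hxA, hxS⟩ | ⟨hxS, hxA⟩
      · -- x ∈ A, x ∉ T⁻¹ S : then T x ∉ Y
        left
        intro hTY
        exact hxS ⟨Set.mem_biUnion hxA hTsub, hTY⟩
      · -- T x ∈ S, x ∉ A : two subgradients
        right
        obtain ⟨hTin, hTY⟩ := hxS
        obtain ⟨a, haA, haSub⟩ := Set.mem_iUnion₂.mp hTin
        refine hNmem (T x) x a hTsub haSub ?_
        rintro rfl
        exact hxA haA
    · left; exact hgrad
  refine measure_mono_null hsub ?_
  refine measure_union_null hZ (measure_union_null hYc hNpre)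
end
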